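/- arXiv:1506.04573 — 5 statements merged into one kernel-verified Lean document; each statement's English description precedes it below -/
import Mathlib

section
/- Let P_S and P_T be two domains (probability measures) on X × Y with Y = {−1,1}, and let D_T denote the marginal of P_T on X. Let A ⊆ X × Y be a measurable set with P_S(Aᶜ) = 0 such that the restriction of P_T to A is absolutely continuous with respect to P_S with density ρ. For q > 1, define β_q = (∫ ρ(x,y)^q dP_S(x,y))^{1/q}, and define η_{T∖S} = P_T(Aᶜ) · sup_{h∈H} R_{T∖S}(h), where T∖S is the conditional distribution of P_T given Aᶜ (η_{T∖S} := 0 when P_T(Aᶜ) = 0) and R_{T∖S}(h) = E_{(x,y)∼T∖S} 1[h(x) ≠ y]. Then for every posterior distribution Q on H: R_{P_T}(G_Q) ≤ (1/2)·d_{D_T}(Q) + β_q · (e_{P_S}(Q))^{1−1/q} + η_{T∖S}. -/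
/-!
STATEMENT 0: Main domain adaptation bound (Theorem 3 of the paper), general `q > 1` case.
`Y = {-1,1}` is encoded as `Bool` (with `true ↔ +1`, `false ↔ -1`).
Voters are indexed by a measurable space `Ω` through the evaluation map `ev`.
The bound is stated in `ℝ≥0∞` so that an infinite divergence `β_q` gives a vacuous bound.
-/

open MeasureTheory ProbabilityTheory Real
open scoped ENNReal Classical

noncomputable section

/-- A measurable `[0,1]`-valued function on a probability space is integrable,
with integral in `[0,1]`. -/
lemma da_int01 {α : Type*} [MeasurableSpace α] (μ : Measure α) [IsProbabilityMeasure μ]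
    {f : α → ℝ} (hf : AEStronglyMeasurable f μ) (h0 : ∀ x, 0 ≤ f x) (h1 : ∀ x, f x ≤ 1) :
    Integrable f μ ∧ 0 ≤ (∫ x, f x ∂μ) ∧ (∫ x, f x ∂μ) ≤ 1 := by
  have hint : Integrable f μ := (integrable_const 1).mono' hf (ae_of_all _ fun x => by
    rw [Real.norm_eq_abs, abs_of_nonneg (h0 x)]; exact h1 x)
  refine ⟨hint, integral_nonneg h0, ?_⟩
  calc ∫ x, f x ∂μ ≤ ∫ _x, (1:ℝ) ∂μ := integral_mono hint (integrable_const 1) h1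
    _ = 1 := by simp

/-- Pointwise Boolean identity behind `risk = d/2 + e`. -/
lemma da_bool_ident (a b c : Bool) :
    (if a ≠ b then (1:ℝ) else 0)
      = (if a ≠ c then (1:ℝ) else 0) + (if b ≠ c then (1:ℝ) else 0)
        - 2 * ((if a ≠ c then (1:ℝ) else 0) * (if b ≠ c then (1:ℝ) else 0)) := by
  cases a <;> cases b <;> cases c <;> norm_num

theorem domain_adaptation_bound_q
    {X : Type*} [MeasurableSpace X] {Ω : Type*} [MeasurableSpace Ω]
    (ev : Ω → X → Bool) (hev : Measurable (Function.uncurry ev))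
    (PS PT : Measure (X × Bool)) [IsProbabilityMeasure PS] [IsProbabilityMeasure PT]
    -- A is a P_S-full measurable set on which P_T has density ρ w.r.t. P_S
    (A : Set (X × Bool)) (hA : MeasurableSet A) (hSA : PS Aᶜ = 0)
    (ρ : X × Bool → ℝ≥0∞) (hρ : Measurable ρ)
    (hdens : PT.restrict A = PS.withDensity ρ)
    (q : ℝ) (hq : 1 < q)
    (Q : Measure Ω) [IsProbabilityMeasure Q] :
    -- R_{P_T}(G_Q) ≤ (1/2) d_{D_T}(Q) + β_q · (e_{P_S}(Q))^{1-1/q} + η_{T∖S}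
    ENNReal.ofReal (∫ z, ∫ h, (if ev h z.1 ≠ z.2 then (1 : ℝ) else 0) ∂Q ∂PT)
      ≤ ENNReal.ofReal ((1 / 2) * ∫ x, ∫ h, ∫ h',
            (if ev h x ≠ ev h' x then (1 : ℝ) else 0) ∂Q ∂Q ∂(PT.map Prod.fst))
        + (∫⁻ z, ρ z ^ q ∂PS) ^ (1 / q)
            * ENNReal.ofReal ((∫ z, ∫ h, ∫ h',
                (if ev h z.1 ≠ z.2 ∧ ev h' z.1 ≠ z.2 then (1 : ℝ) else 0) ∂Q ∂Q ∂PS)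
              ^ (1 - 1 / q))
        + ENNReal.ofReal ((PT Aᶜ).toReal *
            ⨆ h : Ω, ∫ z, (if ev h z.1 ≠ z.2 then (1 : ℝ) else 0) ∂(PT[|Aᶜ])) := by
  classical
  -- pointwise bounds for indicator-like functions
  have h0if : ∀ (c : Prop) [Decidable c], (0:ℝ) ≤ (if c then (1:ℝ) else 0) := by
    intro c _; split <;> norm_num
  have h1if : ∀ (c : Prop) [Decidable c], (if c then (1:ℝ) else 0) ≤ 1 := by
    intro c _; split <;> norm_num
  -- basic measurability facts
  have mE : Measurable (fun p : (X × Bool) × Ω => if ev p.2 p.1.1 ≠ p.1.2 then (1:ℝ) else 0) := by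
    have hf : Measurable fun p : (X × Bool) × Ω => ev p.2 p.1.1 :=
      hev.comp (measurable_snd.prodMk measurable_fst.fst)
    have hs : MeasurableSet {p : (X × Bool) × Ω | ev p.2 p.1.1 = p.1.2} :=
      measurableSet_eq_fun hf measurable_fst.snd
    exact Measurable.ite hs.compl measurable_const measurable_const
  have mE2 : Measurable (fun p : Ω × (X × Bool) => if ev p.1 p.2.1 ≠ p.2.2 then (1:ℝ) else 0) := by
    have hf : Measurable fun p : Ω × (X × Bool) => ev p.1 p.2.1 :=
      hev.comp (measurable_fst.prodMk measurable_snd.fst)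
    have hs : MeasurableSet {p : Ω × (X × Bool) | ev p.1 p.2.1 = p.2.2} :=
      measurableSet_eq_fun hf measurable_snd.snd
    exact Measurable.ite hs.compl measurable_const measurable_const
  have mJF : Measurable (fun p : ((X × Bool) × Ω) × Ω =>
      if ev p.1.2 p.1.1.1 ≠ p.1.1.2 ∧ ev p.2 p.1.1.1 ≠ p.1.1.2 then (1:ℝ) else 0) := by
    have hf1 : Measurable fun p : ((X × Bool) × Ω) × Ω => ev p.1.2 p.1.1.1 :=
      hev.comp (measurable_fst.snd.prodMk measurable_fst.fst.fst)
    have hf2 : Measurable fun p : ((X × Bool) × Ω) × Ω => ev p.2 p.1.1.1 :=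
      hev.comp (measurable_snd.prodMk measurable_fst.fst.fst)
    have hs1 : MeasurableSet {p : ((X × Bool) × Ω) × Ω | ev p.1.2 p.1.1.1 = p.1.1.2} :=
      measurableSet_eq_fun hf1 measurable_fst.fst.snd
    have hs2 : MeasurableSet {p : ((X × Bool) × Ω) × Ω | ev p.2 p.1.1.1 = p.1.1.2} :=
      measurableSet_eq_fun hf2 measurable_fst.fst.snd
    exact Measurable.ite (hs1.compl.inter hs2.compl) measurable_const measurable_const
  have mDF : Measurable (fun p : (X × Ω) × Ω =>
      if ev p.1.2 p.1.1 ≠ ev p.2 p.1.1 then (1:ℝ) else 0) := by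
    have hf1 : Measurable fun p : (X × Ω) × Ω => ev p.1.2 p.1.1 :=
      hev.comp (measurable_fst.snd.prodMk measurable_fst.fst)
    have hf2 : Measurable fun p : (X × Ω) × Ω => ev p.2 p.1.1 :=
      hev.comp (measurable_snd.prodMk measurable_fst.fst)
    have hs : MeasurableSet {p : (X × Ω) × Ω | ev p.1.2 p.1.1 = ev p.2 p.1.1} :=
      measurableSet_eq_fun hf1 hf2
    exact Measurable.ite hs.compl measurable_const measurable_const
  -- iterated strong measurability
  have mRisk : StronglyMeasurable fun z : X × Bool =>
      ∫ h, (if ev h z.1 ≠ z.2 then (1:ℝ) else 0) ∂Q :=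
    mE.stronglyMeasurable.integral_prod_right'
  have mJ1 : StronglyMeasurable fun p : (X × Bool) × Ω =>
      ∫ h', (if ev p.2 p.1.1 ≠ p.1.2 ∧ ev h' p.1.1 ≠ p.1.2 then (1:ℝ) else 0) ∂Q :=
    mJF.stronglyMeasurable.integral_prod_right'
  have mJoint : StronglyMeasurable fun z : X × Bool =>
      ∫ h, ∫ h', (if ev h z.1 ≠ z.2 ∧ ev h' z.1 ≠ z.2 then (1:ℝ) else 0) ∂Q ∂Q :=
    mJ1.integral_prod_right'
  have mD1 : StronglyMeasurable fun p : X × Ω =>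
      ∫ h', (if ev p.2 p.1 ≠ ev h' p.1 then (1:ℝ) else 0) ∂Q :=
    mDF.stronglyMeasurable.integral_prod_right'
  have mD : StronglyMeasurable fun x : X =>
      ∫ h, ∫ h', (if ev h x ≠ ev h' x then (1:ℝ) else 0) ∂Q ∂Q :=
    mD1.integral_prod_right'
  -- integrability / bounds for inner integrals
  have hEz : ∀ z : X × Bool,
      Integrable (fun h : Ω => if ev h z.1 ≠ z.2 then (1:ℝ) else 0) Q
      ∧ 0 ≤ (∫ h, (if ev h z.1 ≠ z.2 then (1:ℝ) else 0) ∂Q)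
      ∧ (∫ h, (if ev h z.1 ≠ z.2 then (1:ℝ) else 0) ∂Q) ≤ 1 := fun z =>
    da_int01 Q ((mE.comp measurable_prodMk_left).aestronglyMeasurable)
      (fun _ => h0if _) (fun _ => h1if _)
  have hJin : ∀ w : (X × Bool) × Ω,
      Integrable (fun h' : Ω =>
        if ev w.2 w.1.1 ≠ w.1.2 ∧ ev h' w.1.1 ≠ w.1.2 then (1:ℝ) else 0) Q
      ∧ 0 ≤ (∫ h', (if ev w.2 w.1.1 ≠ w.1.2 ∧ ev h' w.1.1 ≠ w.1.2 then (1:ℝ) else 0) ∂Q)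
      ∧ (∫ h', (if ev w.2 w.1.1 ≠ w.1.2 ∧ ev h' w.1.1 ≠ w.1.2 then (1:ℝ) else 0) ∂Q) ≤ 1 :=
    fun w => da_int01 Q ((mJF.comp measurable_prodMk_left).aestronglyMeasurable)
      (fun _ => h0if _) (fun _ => h1if _)
  have hJout : ∀ z : X × Bool,
      Integrable (fun h : Ω =>
        ∫ h', (if ev h z.1 ≠ z.2 ∧ ev h' z.1 ≠ z.2 then (1:ℝ) else 0) ∂Q) Q
      ∧ 0 ≤ (∫ h, ∫ h', (if ev h z.1 ≠ z.2 ∧ ev h' z.1 ≠ z.2 then (1:ℝ) else 0) ∂Q ∂Q)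
      ∧ (∫ h, ∫ h', (if ev h z.1 ≠ z.2 ∧ ev h' z.1 ≠ z.2 then (1:ℝ) else 0) ∂Q ∂Q) ≤ 1 :=
    fun z => da_int01 Q ((mJ1.comp_measurable measurable_prodMk_left).aestronglyMeasurable)
      (fun h => (hJin (z, h)).2.1) (fun h => (hJin (z, h)).2.2)
  have hDin : ∀ w : X × Ω,
      Integrable (fun h' : Ω => if ev w.2 w.1 ≠ ev h' w.1 then (1:ℝ) else 0) Q
      ∧ 0 ≤ (∫ h', (if ev w.2 w.1 ≠ ev h' w.1 then (1:ℝ) else 0) ∂Q)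
      ∧ (∫ h', (if ev w.2 w.1 ≠ ev h' w.1 then (1:ℝ) else 0) ∂Q) ≤ 1 :=
    fun w => da_int01 Q ((mDF.comp measurable_prodMk_left).aestronglyMeasurable)
      (fun _ => h0if _) (fun _ => h1if _)
  have hDout : ∀ x : X,
      0 ≤ (∫ h, ∫ h', (if ev h x ≠ ev h' x then (1:ℝ) else 0) ∂Q ∂Q)
      ∧ (∫ h, ∫ h', (if ev h x ≠ ev h' x then (1:ℝ) else 0) ∂Q ∂Q) ≤ 1 := fun x =>
    (da_int01 Q ((mD1.comp_measurable measurable_prodMk_left).aestronglyMeasurable)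
      (fun h => (hDin (x, h)).2.1) (fun h => (hDin (x, h)).2.2)).2
  -- integrability over PT / PS
  have hRiskPT : Integrable (fun z : X × Bool =>
      ∫ h, (if ev h z.1 ≠ z.2 then (1:ℝ) else 0) ∂Q) PT :=
    (da_int01 PT mRisk.aestronglyMeasurable (fun z => (hEz z).2.1) (fun z => (hEz z).2.2)).1
  have hJointPT : Integrable (fun z : X × Bool =>
      ∫ h, ∫ h', (if ev h z.1 ≠ z.2 ∧ ev h' z.1 ≠ z.2 then (1:ℝ) else 0) ∂Q ∂Q) PT :=
    (da_int01 PT mJoint.aestronglyMeasurable (fun z => (hJout z).2.1) (fun z => (hJout z).2.2)).1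
  have hJointPS := da_int01 PS mJoint.aestronglyMeasurable
      (fun z => (hJout z).2.1) (fun z => (hJout z).2.2)
  have hDPT : Integrable (fun z : X × Bool =>
      ∫ h, ∫ h', (if ev h z.1 ≠ ev h' z.1 then (1:ℝ) else 0) ∂Q ∂Q) PT :=
    (da_int01 PT ((mD.comp_measurable measurable_fst).aestronglyMeasurable)
      (fun z => (hDout z.1).1) (fun z => (hDout z.1).2)).1
  -- the key pointwise identity: risk = d/2 + e
  have key : ∀ z : X × Bool,
      (∫ h, (if ev h z.1 ≠ z.2 then (1:ℝ) else 0) ∂Q)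
    = (1/2) * (∫ h, ∫ h', (if ev h z.1 ≠ ev h' z.1 then (1:ℝ) else 0) ∂Q ∂Q)
      + ∫ h, ∫ h', (if ev h z.1 ≠ z.2 ∧ ev h' z.1 ≠ z.2 then (1:ℝ) else 0) ∂Q ∂Q := by
    intro z
    set p : ℝ := ∫ h, (if ev h z.1 ≠ z.2 then (1:ℝ) else 0) ∂Q with hp
    have hEint : Integrable (fun h : Ω => if ev h z.1 ≠ z.2 then (1:ℝ) else 0) Q := (hEz z).1
    have hinner_joint : ∀ h : Ω,
        (∫ h', (if ev h z.1 ≠ z.2 ∧ ev h' z.1 ≠ z.2 then (1:ℝ) else 0) ∂Q)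
          = (if ev h z.1 ≠ z.2 then (1:ℝ) else 0) * p := by
      intro h
      have : ∀ h' : Ω, (if ev h z.1 ≠ z.2 ∧ ev h' z.1 ≠ z.2 then (1:ℝ) else 0)
          = (if ev h z.1 ≠ z.2 then (1:ℝ) else 0) * (if ev h' z.1 ≠ z.2 then (1:ℝ) else 0) := by
        intro h'
        by_cases h1 : ev h z.1 ≠ z.2 <;> by_cases h2 : ev h' z.1 ≠ z.2 <;> simp [h1, h2]
      simp_rw [this]
      rw [integral_const_mul]
    have hjoint : (∫ h, ∫ h', (if ev h z.1 ≠ z.2 ∧ ev h' z.1 ≠ z.2 then (1:ℝ) else 0) ∂Q ∂Q)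
        = p * p := by
      simp_rw [hinner_joint]
      rw [integral_mul_const]
    have hinner_dis : ∀ h : Ω,
        (∫ h', (if ev h z.1 ≠ ev h' z.1 then (1:ℝ) else 0) ∂Q)
          = (if ev h z.1 ≠ z.2 then (1:ℝ) else 0) + p
            - 2 * ((if ev h z.1 ≠ z.2 then (1:ℝ) else 0) * p) := by
      intro h
      have hid : ∀ h' : Ω, (if ev h z.1 ≠ ev h' z.1 then (1:ℝ) else 0)
          = (if ev h z.1 ≠ z.2 then (1:ℝ) else 0) + (if ev h' z.1 ≠ z.2 then (1:ℝ) else 0)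
            - 2 * ((if ev h z.1 ≠ z.2 then (1:ℝ) else 0)
              * (if ev h' z.1 ≠ z.2 then (1:ℝ) else 0)) :=
        fun h' => da_bool_ident (ev h z.1) (ev h' z.1) z.2
      simp_rw [hid]
      have I1 : Integrable (fun h' : Ω => (if ev h z.1 ≠ z.2 then (1:ℝ) else 0)
          + (if ev h' z.1 ≠ z.2 then (1:ℝ) else 0)) Q := (integrable_const _).add hEint
      have I2 : Integrable (fun h' : Ω => 2 * ((if ev h z.1 ≠ z.2 then (1:ℝ) else 0)
          * (if ev h' z.1 ≠ z.2 then (1:ℝ) else 0))) Q := (hEint.const_mul _).const_mul 2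
      rw [integral_sub I1 I2, integral_add (integrable_const _) hEint, integral_const,
        integral_const_mul, integral_const_mul]
      simp only [probReal_univ, one_smul]
      rfl
    have hdis : (∫ h, ∫ h', (if ev h z.1 ≠ ev h' z.1 then (1:ℝ) else 0) ∂Q ∂Q)
        = p + p - 2 * (p * p) := by
      simp_rw [hinner_dis]
      have I1 : Integrable (fun h : Ω => (if ev h z.1 ≠ z.2 then (1:ℝ) else 0) + p) Q :=
        hEint.add (integrable_const _)
      have I2 : Integrable (fun h : Ω => 2 * ((if ev h z.1 ≠ z.2 then (1:ℝ) else 0) * p)) Q :=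
        (hEint.mul_const _).const_mul 2
      rw [integral_sub I1 I2, integral_add hEint (integrable_const _), integral_const,
        integral_const_mul, integral_mul_const]
      simp only [probReal_univ, smul_eq_mul, one_mul, mul_one]
      ring
    rw [hjoint, hdis]; ring
  -- decomposition of the target risk
  have hsplit : (∫ z, ∫ h, (if ev h z.1 ≠ z.2 then (1 : ℝ) else 0) ∂Q ∂PT)
      = (1/2) * (∫ x, ∫ h, ∫ h',
            (if ev h x ≠ ev h' x then (1 : ℝ) else 0) ∂Q ∂Q ∂(PT.map Prod.fst))
        + ((∫ z in A, ∫ h, ∫ h',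
              (if ev h z.1 ≠ z.2 ∧ ev h' z.1 ≠ z.2 then (1:ℝ) else 0) ∂Q ∂Q ∂PT)
          + (∫ z in Aᶜ, ∫ h, ∫ h',
              (if ev h z.1 ≠ z.2 ∧ ev h' z.1 ≠ z.2 then (1:ℝ) else 0) ∂Q ∂Q ∂PT)) := by
    have hmap : (∫ x, ∫ h, ∫ h',
          (if ev h x ≠ ev h' x then (1 : ℝ) else 0) ∂Q ∂Q ∂(PT.map Prod.fst))
        = ∫ z, ∫ h, ∫ h', (if ev h z.1 ≠ ev h' z.1 then (1 : ℝ) else 0) ∂Q ∂Q ∂PT :=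
      integral_map measurable_fst.aemeasurable mD.aestronglyMeasurable
    rw [hmap, integral_add_compl hA hJointPT]
    calc (∫ z, ∫ h, (if ev h z.1 ≠ z.2 then (1 : ℝ) else 0) ∂Q ∂PT)
        = ∫ z, ((1/2) * (∫ h, ∫ h', (if ev h z.1 ≠ ev h' z.1 then (1:ℝ) else 0) ∂Q ∂Q)
            + ∫ h, ∫ h', (if ev h z.1 ≠ z.2 ∧ ev h' z.1 ≠ z.2 then (1:ℝ) else 0) ∂Q ∂Q) ∂PT :=
          integral_congr_ae (ae_of_all _ key)
      _ = (1/2) * (∫ z, ∫ h, ∫ h',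
              (if ev h z.1 ≠ ev h' z.1 then (1:ℝ) else 0) ∂Q ∂Q ∂PT)
          + ∫ z, ∫ h, ∫ h',
              (if ev h z.1 ≠ z.2 ∧ ev h' z.1 ≠ z.2 then (1:ℝ) else 0) ∂Q ∂Q ∂PT := by
          rw [integral_add (hDPT.const_mul _) hJointPT, integral_const_mul]
  -- nonnegativity of the three summands
  have h0d : (0:ℝ) ≤ (1/2) * ∫ x, ∫ h, ∫ h',
      (if ev h x ≠ ev h' x then (1 : ℝ) else 0) ∂Q ∂Q ∂(PT.map Prod.fst) := by
    have : (0:ℝ) ≤ ∫ x, ∫ h, ∫ h',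
        (if ev h x ≠ ev h' x then (1 : ℝ) else 0) ∂Q ∂Q ∂(PT.map Prod.fst) :=
      integral_nonneg fun x => (hDout x).1
    linarith
  have h0JA : (0:ℝ) ≤ ∫ z in A, ∫ h, ∫ h',
      (if ev h z.1 ≠ z.2 ∧ ev h' z.1 ≠ z.2 then (1:ℝ) else 0) ∂Q ∂Q ∂PT :=
    integral_nonneg fun z => (hJout z).2.1
  have h0JAc : (0:ℝ) ≤ ∫ z in Aᶜ, ∫ h, ∫ h',
      (if ev h z.1 ≠ z.2 ∧ ev h' z.1 ≠ z.2 then (1:ℝ) else 0) ∂Q ∂Q ∂PT :=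
    integral_nonneg fun z => (hJout z).2.1
  -- Bound for the A part, via Hölder
  have hJAb : ENNReal.ofReal (∫ z in A, ∫ h, ∫ h',
        (if ev h z.1 ≠ z.2 ∧ ev h' z.1 ≠ z.2 then (1:ℝ) else 0) ∂Q ∂Q ∂PT)
      ≤ (∫⁻ z, ρ z ^ q ∂PS) ^ (1 / q)
          * ENNReal.ofReal ((∫ z, ∫ h, ∫ h',
              (if ev h z.1 ≠ z.2 ∧ ev h' z.1 ≠ z.2 then (1 : ℝ) else 0) ∂Q ∂Q ∂PS)
            ^ (1 - 1 / q)) := by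
    set J : X × Bool → ℝ := fun z => ∫ h, ∫ h',
      (if ev h z.1 ≠ z.2 ∧ ev h' z.1 ≠ z.2 then (1:ℝ) else 0) ∂Q ∂Q with hJ
    set Jl : X × Bool → ℝ≥0∞ := fun z => ENNReal.ofReal (J z) with hJl
    have mJl : Measurable Jl := ENNReal.measurable_ofReal.comp mJoint.measurable
    have hcj : q.HolderConjugate q.conjExponent := Real.HolderConjugate.conjExponent hq
    have hq'1 : 1 < q.conjExponent := hcj.symm.lt
    have hinvq' : 1 / q.conjExponent = 1 - 1/q := by
      have h := hcj.inv_add_inv_eq_one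
      rw [one_div, one_div]; linarith
    have step1 : ENNReal.ofReal (∫ z in A, J z ∂PT) = ∫⁻ z, (ρ * Jl) z ∂PS := by
      rw [ofReal_integral_eq_lintegral_ofReal (hJointPT.restrict)
        (ae_of_all _ fun z => (hJout z).2.1), hdens,
        lintegral_withDensity_eq_lintegral_mul PS hρ mJl]
    have step2 : (∫⁻ z, (ρ * Jl) z ∂PS)
        ≤ (∫⁻ z, ρ z ^ q ∂PS) ^ (1/q)
          * (∫⁻ z, Jl z ^ q.conjExponent ∂PS) ^ (1/q.conjExponent) :=
      ENNReal.lintegral_mul_le_Lp_mul_Lq PS hcj hρ.aemeasurable mJl.aemeasurable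
    have step3 : (∫⁻ z, Jl z ^ q.conjExponent ∂PS) ^ (1/q.conjExponent)
        ≤ ENNReal.ofReal ((∫ z, J z ∂PS) ^ (1 - 1/q)) := by
      have hle : (∫⁻ z, Jl z ^ q.conjExponent ∂PS) ≤ ∫⁻ z, Jl z ∂PS := by
        refine lintegral_mono fun z => ?_
        calc Jl z ^ q.conjExponent ≤ Jl z ^ (1:ℝ) :=
              ENNReal.rpow_le_rpow_of_exponent_ge
                (ENNReal.ofReal_le_one.2 (hJout z).2.2) (le_of_lt hq'1)
          _ = Jl z := ENNReal.rpow_one _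
      have heq : (∫⁻ z, Jl z ∂PS) = ENNReal.ofReal (∫ z, J z ∂PS) :=
        (ofReal_integral_eq_lintegral_ofReal hJointPS.1
          (ae_of_all _ fun z => (hJout z).2.1)).symm
      have hexp : (0:ℝ) ≤ 1/q.conjExponent := by positivity
      calc (∫⁻ z, Jl z ^ q.conjExponent ∂PS) ^ (1/q.conjExponent)
          ≤ (ENNReal.ofReal (∫ z, J z ∂PS)) ^ (1/q.conjExponent) :=
            ENNReal.rpow_le_rpow (hle.trans_eq heq) hexp
        _ = ENNReal.ofReal ((∫ z, J z ∂PS) ^ (1 - 1/q)) := by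
            rw [ENNReal.ofReal_rpow_of_nonneg hJointPS.2.1 hexp, hinvq']
    calc ENNReal.ofReal (∫ z in A, J z ∂PT) = ∫⁻ z, (ρ * Jl) z ∂PS := step1
      _ ≤ (∫⁻ z, ρ z ^ q ∂PS) ^ (1/q)
          * (∫⁻ z, Jl z ^ q.conjExponent ∂PS) ^ (1/q.conjExponent) := step2
      _ ≤ (∫⁻ z, ρ z ^ q ∂PS) ^ (1/q)
          * ENNReal.ofReal ((∫ z, J z ∂PS) ^ (1 - 1/q)) := mul_le_mul_right step3 _
  -- Bound for the Aᶜ part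
  have hJAcb : (∫ z in Aᶜ, ∫ h, ∫ h',
        (if ev h z.1 ≠ z.2 ∧ ev h' z.1 ≠ z.2 then (1:ℝ) else 0) ∂Q ∂Q ∂PT)
      ≤ (PT Aᶜ).toReal *
          ⨆ h : Ω, ∫ z, (if ev h z.1 ≠ z.2 then (1 : ℝ) else 0) ∂(PT[|Aᶜ]) := by
    have hmono : ∀ z : X × Bool,
        (∫ h, ∫ h', (if ev h z.1 ≠ z.2 ∧ ev h' z.1 ≠ z.2 then (1:ℝ) else 0) ∂Q ∂Q)
          ≤ ∫ h, (if ev h z.1 ≠ z.2 then (1:ℝ) else 0) ∂Q := by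
      intro z
      refine integral_mono (hJout z).1 (hEz z).1 fun h => ?_
      calc (∫ h', (if ev h z.1 ≠ z.2 ∧ ev h' z.1 ≠ z.2 then (1:ℝ) else 0) ∂Q)
          ≤ ∫ _h', (if ev h z.1 ≠ z.2 then (1:ℝ) else 0) ∂Q := by
            refine integral_mono (hJin (z, h)).1 (integrable_const _) fun h' => ?_
            by_cases h1 : ev h z.1 ≠ z.2 <;> by_cases h2 : ev h' z.1 ≠ z.2 <;> simp [h1, h2]
        _ = (if ev h z.1 ≠ z.2 then (1:ℝ) else 0) := by simp
    have h1 : (∫ z in Aᶜ, ∫ h, ∫ h',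
          (if ev h z.1 ≠ z.2 ∧ ev h' z.1 ≠ z.2 then (1:ℝ) else 0) ∂Q ∂Q ∂PT)
        ≤ ∫ z in Aᶜ, ∫ h, (if ev h z.1 ≠ z.2 then (1:ℝ) else 0) ∂Q ∂PT :=
      integral_mono hJointPT.restrict hRiskPT.restrict hmono
    rcases eq_or_ne (PT Aᶜ) 0 with hc | hc
    · have h2 : (∫ z in Aᶜ, ∫ h, (if ev h z.1 ≠ z.2 then (1:ℝ) else 0) ∂Q ∂PT) = 0 := by
        rw [Measure.restrict_eq_zero.2 hc, integral_zero_measure]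
      simpa [hc] using h1.trans h2.le
    · haveI hcp : IsProbabilityMeasure (PT[|Aᶜ]) := cond_isProbabilityMeasure hc
      have hb : ∀ h : Ω,
          Integrable (fun z : X × Bool => if ev h z.1 ≠ z.2 then (1:ℝ) else 0) (PT[|Aᶜ])
          ∧ 0 ≤ (∫ z, (if ev h z.1 ≠ z.2 then (1:ℝ) else 0) ∂(PT[|Aᶜ]))
          ∧ (∫ z, (if ev h z.1 ≠ z.2 then (1:ℝ) else 0) ∂(PT[|Aᶜ])) ≤ 1 := fun h =>
        da_int01 (PT[|Aᶜ]) ((mE2.comp measurable_prodMk_left).aestronglyMeasurable)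
          (fun _ => h0if _) (fun _ => h1if _)
      have mRcond : StronglyMeasurable fun h : Ω =>
          ∫ z, (if ev h z.1 ≠ z.2 then (1:ℝ) else 0) ∂(PT[|Aᶜ]) :=
        mE2.stronglyMeasurable.integral_prod_right'
      have hint_outer : Integrable (fun h : Ω =>
          ∫ z, (if ev h z.1 ≠ z.2 then (1:ℝ) else 0) ∂(PT[|Aᶜ])) Q :=
        (da_int01 Q mRcond.aestronglyMeasurable (fun h => (hb h).2.1) (fun h => (hb h).2.2)).1
      have hbdd : BddAbove (Set.range fun h : Ω =>
          ∫ z, (if ev h z.1 ≠ z.2 then (1:ℝ) else 0) ∂(PT[|Aᶜ])) := by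
        refine ⟨1, ?_⟩
        rintro _ ⟨h, rfl⟩
        exact (hb h).2.2
      have hswap : (∫ z, ∫ h, (if ev h z.1 ≠ z.2 then (1:ℝ) else 0) ∂Q ∂(PT[|Aᶜ]))
          = ∫ h, ∫ z, (if ev h z.1 ≠ z.2 then (1:ℝ) else 0) ∂(PT[|Aᶜ]) ∂Q := by
        refine integral_integral_swap ?_
        exact (da_int01 ((PT[|Aᶜ]).prod Q) mE.aestronglyMeasurable
          (fun _ => h0if _) (fun _ => h1if _)).1
      have h4 : (∫ h, (∫ z, (if ev h z.1 ≠ z.2 then (1:ℝ) else 0) ∂(PT[|Aᶜ])) ∂Q)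
          ≤ ⨆ h : Ω, ∫ z, (if ev h z.1 ≠ z.2 then (1:ℝ) else 0) ∂(PT[|Aᶜ]) := by
        calc (∫ h, (∫ z, (if ev h z.1 ≠ z.2 then (1:ℝ) else 0) ∂(PT[|Aᶜ])) ∂Q)
            ≤ ∫ _h, (⨆ h' : Ω, ∫ z,
                (if ev h' z.1 ≠ z.2 then (1:ℝ) else 0) ∂(PT[|Aᶜ])) ∂Q :=
              integral_mono hint_outer (integrable_const _) fun h => le_ciSup hbdd h
          _ = _ := by simp
      have hpos : (PT Aᶜ).toReal ≠ 0 := ENNReal.toReal_ne_zero.2 ⟨hc, measure_ne_top _ _⟩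
      have h3 : (∫ z in Aᶜ, ∫ h, (if ev h z.1 ≠ z.2 then (1:ℝ) else 0) ∂Q ∂PT)
          = (PT Aᶜ).toReal *
              ∫ z, ∫ h, (if ev h z.1 ≠ z.2 then (1:ℝ) else 0) ∂Q ∂(PT[|Aᶜ]) := by
        have hcondeq : (∫ z, ∫ h, (if ev h z.1 ≠ z.2 then (1:ℝ) else 0) ∂Q ∂(PT[|Aᶜ]))
            = (PT Aᶜ).toReal⁻¹ *
                ∫ z in Aᶜ, ∫ h, (if ev h z.1 ≠ z.2 then (1:ℝ) else 0) ∂Q ∂PT := by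
          show (∫ z, ∫ h, (if ev h z.1 ≠ z.2 then (1:ℝ) else 0) ∂Q
              ∂((PT Aᶜ)⁻¹ • PT.restrict Aᶜ)) = _
          rw [integral_smul_measure, ENNReal.toReal_inv, smul_eq_mul]
        rw [hcondeq]
        field_simp
      calc (∫ z in Aᶜ, ∫ h, ∫ h',
            (if ev h z.1 ≠ z.2 ∧ ev h' z.1 ≠ z.2 then (1:ℝ) else 0) ∂Q ∂Q ∂PT)
          ≤ ∫ z in Aᶜ, ∫ h, (if ev h z.1 ≠ z.2 then (1:ℝ) else 0) ∂Q ∂PT := h1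
        _ = (PT Aᶜ).toReal *
              ∫ z, ∫ h, (if ev h z.1 ≠ z.2 then (1:ℝ) else 0) ∂Q ∂(PT[|Aᶜ]) := h3
        _ ≤ (PT Aᶜ).toReal *
              ⨆ h : Ω, ∫ z, (if ev h z.1 ≠ z.2 then (1:ℝ) else 0) ∂(PT[|Aᶜ]) := by
            refine mul_le_mul_of_nonneg_left ?_ ENNReal.toReal_nonneg
            rw [hswap]
            exact h4
  -- assemble everything
  rw [hsplit, ENNReal.ofReal_add h0d (add_nonneg h0JA h0JAc), ENNReal.ofReal_add h0JA h0JAc,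
    ← add_assoc]
  exact add_le_add (add_le_add le_rfl hJAb) (ENNReal.ofReal_le_ofReal hJAcb)
end
end

section
/- Let P_S and P_T be two domains on X × Y with Y = {−1,1}, let D_T denote the marginal of P_T on X, and let A ⊆ X × Y be a measurable set with P_S(Aᶜ) = 0 such that the restriction of P_T to A is absolutely continuous with respect to P_S with density ρ. Define β_∞ as the P_S-essential supremum of ρ, and define η_{T∖S} = P_T(Aᶜ) · sup_{h∈H} R_{T∖S}(h), where T∖S is the conditional distribution of P_T given Aᶜ (η_{T∖S} := 0 when P_T(Aᶜ) = 0). Then for every posterior distribution Q on H: R_{P_T}(G_Q) ≤ (1/2)·d_{D_T}(Q) + β_∞ · e_{P_S}(Q) + η_{T∖S}. -/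
/-!
STATEMENT 1: Main domain adaptation bound, limit case `q → ∞`:
`β_∞` is the `P_S`-essential supremum of the density `ρ` of `P_T` restricted to `A`
with respect to `P_S`.  `Y = {-1,1}` is encoded as `Bool` (`true ↔ +1`, `false ↔ -1`).
-/

open MeasureTheory ProbabilityTheory Real
open scoped ENNReal Classical

noncomputable section

private lemma integral_toReal_aux {α : Type*} [MeasurableSpace α] (μ : Measure α)
    (f : α → ℝ≥0∞) (hf : Measurable f) (hle : ∀ a, f a ≤ 1) :
    ∫ a, (f a).toReal ∂μ = (∫⁻ a, f a ∂μ).toReal :=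
  integral_toReal hf.aemeasurable (Filter.Eventually.of_forall fun a =>
    lt_of_le_of_lt (hle a) ENNReal.one_lt_top)

private lemma lintegral_le_one_aux {α : Type*} [MeasurableSpace α] (μ : Measure α)
    [IsProbabilityMeasure μ] (f : α → ℝ≥0∞) (hle : ∀ a, f a ≤ 1) :
    ∫⁻ a, f a ∂μ ≤ 1 := by
  calc ∫⁻ a, f a ∂μ ≤ ∫⁻ _, 1 ∂μ := lintegral_mono hle
  _ = 1 := by simp

theorem domain_adaptation_bound_inf
    {X : Type*} [MeasurableSpace X] {Ω : Type*} [MeasurableSpace Ω]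
    (ev : Ω → X → Bool) (hev : Measurable (Function.uncurry ev))
    (PS PT : Measure (X × Bool)) [IsProbabilityMeasure PS] [IsProbabilityMeasure PT]
    (A : Set (X × Bool)) (hA : MeasurableSet A) (hSA : PS Aᶜ = 0)
    (ρ : X × Bool → ℝ≥0∞) (hρ : Measurable ρ)
    (hdens : PT.restrict A = PS.withDensity ρ)
    (Q : Measure Ω) [IsProbabilityMeasure Q] :
    -- R_{P_T}(G_Q) ≤ (1/2) d_{D_T}(Q) + β_∞ · e_{P_S}(Q) + η_{T∖S}
    ENNReal.ofReal (∫ z, ∫ h, (if ev h z.1 ≠ z.2 then (1 : ℝ) else 0) ∂Q ∂PT)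
      ≤ ENNReal.ofReal ((1 / 2) * ∫ x, ∫ h, ∫ h',
            (if ev h x ≠ ev h' x then (1 : ℝ) else 0) ∂Q ∂Q ∂(PT.map Prod.fst))
        + essSup ρ PS
            * ENNReal.ofReal (∫ z, ∫ h, ∫ h',
                (if ev h z.1 ≠ z.2 ∧ ev h' z.1 ≠ z.2 then (1 : ℝ) else 0) ∂Q ∂Q ∂PS)
        + ENNReal.ofReal ((PT Aᶜ).toReal *
            ⨆ h : Ω, ∫ z, (if ev h z.1 ≠ z.2 then (1 : ℝ) else 0) ∂(PT[|Aᶜ])) := by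
  classical
  set F : Ω → X × Bool → ℝ≥0∞ := fun h z => if ev h z.1 ≠ z.2 then 1 else 0 with hFdef
  set D : Ω → Ω → X → ℝ≥0∞ := fun h h' x => if ev h x ≠ ev h' x then 1 else 0 with hDdef
  set J : Ω → Ω → X × Bool → ℝ≥0∞ :=
    fun h h' z => if ev h z.1 ≠ z.2 ∧ ev h' z.1 ≠ z.2 then 1 else 0 with hJdef
  have hfin3 : ∀ s : Set (Bool × Bool × Bool), MeasurableSet s :=
    fun s => (Set.toFinite s).measurableSet
  have hfin2 : ∀ s : Set (Bool × Bool), MeasurableSet s :=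
    fun s => (Set.toFinite s).measurableSet
  -- pointwise bounds
  have hF1 : ∀ h z, F h z ≤ 1 := by intro h z; simp only [hFdef]; split_ifs <;> simp
  have hD1 : ∀ h h' x, D h h' x ≤ 1 := by intro h h' x; simp only [hDdef]; split_ifs <;> simp
  have hJ1 : ∀ h h' z, J h h' z ≤ 1 := by intro h h' z; simp only [hJdef]; split_ifs <;> simp
  have hJF : ∀ h h' z, J h h' z ≤ F h z := by
    intro h h' z; simp only [hJdef, hFdef]; split_ifs with h1 h2 <;> simp_all
  -- joint measurability
  have hFm : Measurable fun p : Ω × (X × Bool) => F p.1 p.2 := by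
    have h1 : Measurable fun p : Ω × (X × Bool) => ev p.1 p.2.1 :=
      hev.comp (measurable_fst.prodMk (measurable_fst.comp measurable_snd))
    have h2 : Measurable fun p : Ω × (X × Bool) => p.2.2 := measurable_snd.comp measurable_snd
    exact Measurable.ite ((h1.prodMk h2) (hfin2 {q | q.1 ≠ q.2}))
      measurable_const measurable_const
  have hDm : Measurable fun q : (X × Ω) × Ω => D q.1.2 q.2 q.1.1 := by
    have h1 : Measurable fun q : (X × Ω) × Ω => ev q.1.2 q.1.1 :=
      hev.comp ((measurable_snd.comp measurable_fst).prodMk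
        (measurable_fst.comp measurable_fst))
    have h2 : Measurable fun q : (X × Ω) × Ω => ev q.2 q.1.1 :=
      hev.comp (measurable_snd.prodMk (measurable_fst.comp measurable_fst))
    exact Measurable.ite ((h1.prodMk h2) (hfin2 {q | q.1 ≠ q.2}))
      measurable_const measurable_const
  have hJm : Measurable fun q : ((X × Bool) × Ω) × Ω => J q.1.2 q.2 q.1.1 := by
    have h1 : Measurable fun q : ((X × Bool) × Ω) × Ω => ev q.1.2 q.1.1.1 :=
      hev.comp ((measurable_snd.comp measurable_fst).prodMk
        (measurable_fst.comp (measurable_fst.comp measurable_fst)))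
    have h2 : Measurable fun q : ((X × Bool) × Ω) × Ω => ev q.2 q.1.1.1 :=
      hev.comp (measurable_snd.prodMk
        (measurable_fst.comp (measurable_fst.comp measurable_fst)))
    have h3 : Measurable fun q : ((X × Bool) × Ω) × Ω => q.1.1.2 :=
      measurable_snd.comp (measurable_fst.comp measurable_fst)
    exact Measurable.ite ((h1.prodMk (h2.prodMk h3))
      (hfin3 {t | t.1 ≠ t.2.2 ∧ t.2.1 ≠ t.2.2})) measurable_const measurable_const
  -- averaged functions
  set Iz : X × Bool → ℝ≥0∞ := fun z => ∫⁻ h, F h z ∂Q with hIdef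
  set DD : X → ℝ≥0∞ := fun x => ∫⁻ h, ∫⁻ h', D h h' x ∂Q ∂Q with hDDdef
  set JJ : X × Bool → ℝ≥0∞ := fun z => ∫⁻ h, ∫⁻ h', J h h' z ∂Q ∂Q with hJJdef
  have hIm : Measurable Iz :=
    Measurable.lintegral_prod_right (f := fun z h => F h z) (hFm.comp measurable_swap)
  have hDin : Measurable fun p : X × Ω => ∫⁻ h', D p.2 h' p.1 ∂Q :=
    Measurable.lintegral_prod_right (f := fun (p : X × Ω) (h' : Ω) => D p.2 h' p.1) (by exact hDm)
  have hDDm : Measurable DD :=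
    Measurable.lintegral_prod_right (f := fun x h => ∫⁻ h', D h h' x ∂Q) (by exact hDin)
  have hJin : Measurable fun p : (X × Bool) × Ω => ∫⁻ h', J p.2 h' p.1 ∂Q :=
    Measurable.lintegral_prod_right (f := fun (p : (X × Bool) × Ω) (h' : Ω) => J p.2 h' p.1) (by exact hJm)
  have hJJm : Measurable JJ :=
    Measurable.lintegral_prod_right (f := fun z h => ∫⁻ h', J h h' z ∂Q) (by exact hJin)
  -- slice measurability
  have hFsl : ∀ z, Measurable fun h => F h z := fun z =>
    hFm.comp (measurable_id.prodMk measurable_const)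
  have hFsl' : ∀ h, Measurable fun z => F h z := fun h =>
    hFm.comp (measurable_const.prodMk measurable_id)
  have hDsl : ∀ h x, Measurable fun h' => D h h' x := fun h x =>
    hDm.comp ((measurable_const.prodMk measurable_id :
      Measurable fun h' : Ω => ((x, h), h')))
  have hDsl2 : ∀ x, Measurable fun h => ∫⁻ h', D h h' x ∂Q := fun x =>
    hDin.comp ((measurable_const.prodMk measurable_id :
      Measurable fun h : Ω => (x, h)))
  have hJsl : ∀ h z, Measurable fun h' => J h h' z := fun h z =>
    hJm.comp ((measurable_const.prodMk measurable_id :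
      Measurable fun h' : Ω => ((z, h), h')))
  have hJsl2 : ∀ z, Measurable fun h => ∫⁻ h', J h h' z ∂Q := fun z =>
    hJin.comp ((measurable_const.prodMk measurable_id :
      Measurable fun h : Ω => (z, h)))
  -- bounds on averages
  have hI1 : ∀ z, Iz z ≤ 1 := fun z => lintegral_le_one_aux Q _ (fun h => hF1 h z)
  have hDD1 : ∀ x, DD x ≤ 1 := fun x => lintegral_le_one_aux Q _
    (fun h => lintegral_le_one_aux Q _ (fun h' => hD1 h h' x))
  have hJJ1 : ∀ z, JJ z ≤ 1 := fun z => lintegral_le_one_aux Q _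
    (fun h => lintegral_le_one_aux Q _ (fun h' => hJ1 h h' z))
  -- pointwise identity F h z + F h' z = D h h' z.1 + 2 * J h h' z
  have hkey : ∀ (h h' : Ω) (z : X × Bool),
      F h z + F h' z = D h h' z.1 + 2 * J h h' z := by
    intro h h' z
    obtain ⟨x, y⟩ := z
    simp only [hFdef, hDdef, hJdef]
    cases hb : ev h x <;> cases hb' : ev h' x <;> cases y <;> simp [two_mul, one_add_one_eq_two]
  -- averaged identity
  have hkeyI : ∀ z : X × Bool, Iz z = 1/2 * DD z.1 + JJ z := by
    intro z
    have e1 : ∫⁻ h, ∫⁻ h', (F h z + F h' z) ∂Q ∂Q = Iz z + Iz z := by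
      have inner : ∀ h, ∫⁻ h', (F h z + F h' z) ∂Q = F h z + Iz z := by
        intro h
        rw [lintegral_add_left measurable_const]
        simp [hIdef]
      rw [lintegral_congr inner, lintegral_add_right _ measurable_const]
      simp [hIdef, add_comm]
    have e2 : ∫⁻ h, ∫⁻ h', (F h z + F h' z) ∂Q ∂Q = DD z.1 + 2 * JJ z := by
      have inner : ∀ h, ∫⁻ h', (F h z + F h' z) ∂Q
          = ∫⁻ h', D h h' z.1 ∂Q + 2 * ∫⁻ h', J h h' z ∂Q := by
        intro h
        rw [lintegral_congr (fun h' => hkey h h' z),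
          lintegral_add_left (hDsl h z.1), lintegral_const_mul _ (hJsl h z)]
      rw [lintegral_congr inner,
        lintegral_add_left (hDsl2 z.1)]
      rw [lintegral_const_mul _ (hJsl2 z)]
    have e3 : 2 * Iz z = DD z.1 + 2 * JJ z := by
      rw [two_mul, ← e1, e2]
    have h2 : (2 : ℝ≥0∞) ≠ 0 := two_ne_zero
    have h2' : (2 : ℝ≥0∞) ≠ ⊤ := ENNReal.ofNat_ne_top
    have : 2 * Iz z = 2 * (1/2 * DD z.1 + JJ z) := by
      rw [e3, mul_add, ← mul_assoc]
      congr 1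
      rw [one_div, ENNReal.mul_inv_cancel h2 h2', one_mul]
    exact (ENNReal.mul_left_strictMono h2 h2').injective
      (by rw [mul_comm (Iz z), mul_comm (1/2 * DD z.1 + JJ z)]; exact this)
  -- real ↔ ennreal conversions
  haveI : IsProbabilityMeasure (PT.map (Prod.fst : X × Bool → X)) :=
    Measure.isProbabilityMeasure_map measurable_fst.aemeasurable
  have hhalf : ENNReal.ofReal (1/2 : ℝ) = (1/2 : ℝ≥0∞) := by
    rw [ENNReal.ofReal_div_of_pos (by norm_num)]
    norm_num
  have hconvF : ∀ (μ : Measure (X × Bool)) (h : Ω),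
      ∫ z, (if ev h z.1 ≠ z.2 then (1 : ℝ) else 0) ∂μ = (∫⁻ z, F h z ∂μ).toReal := by
    intro μ h
    rw [show (fun z : X × Bool => (if ev h z.1 ≠ z.2 then (1 : ℝ) else 0))
        = fun z => (F h z).toReal from funext fun z => by
          simp only [hFdef]; split_ifs <;> simp]
    exact integral_toReal_aux _ _ (hFsl' h) (fun z => hF1 h z)
  have hinnF : ∀ z : X × Bool,
      ∫ h, (if ev h z.1 ≠ z.2 then (1 : ℝ) else 0) ∂Q = (Iz z).toReal := by
    intro z
    rw [show (fun h : Ω => (if ev h z.1 ≠ z.2 then (1 : ℝ) else 0))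
        = fun h => (F h z).toReal from funext fun h => by
          simp only [hFdef]; split_ifs <;> simp]
    exact integral_toReal_aux _ _ (hFsl z) (fun h => hF1 h z)
  have eL : ENNReal.ofReal (∫ z, ∫ h, (if ev h z.1 ≠ z.2 then (1 : ℝ) else 0) ∂Q ∂PT)
      = ∫⁻ z, Iz z ∂PT := by
    rw [show (fun z : X × Bool => ∫ h, (if ev h z.1 ≠ z.2 then (1 : ℝ) else 0) ∂Q)
        = fun z => (Iz z).toReal from funext hinnF,
      integral_toReal_aux PT Iz hIm hI1, ENNReal.ofReal_toReal]
    exact ne_top_of_le_ne_top ENNReal.one_ne_top (lintegral_le_one_aux PT Iz hI1)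
  have hinnD : ∀ x : X, ∫ h, ∫ h', (if ev h x ≠ ev h' x then (1 : ℝ) else 0) ∂Q ∂Q
      = (DD x).toReal := by
    intro x
    have inn : ∀ h : Ω, ∫ h', (if ev h x ≠ ev h' x then (1 : ℝ) else 0) ∂Q
        = (∫⁻ h', D h h' x ∂Q).toReal := by
      intro h
      rw [show (fun h' : Ω => (if ev h x ≠ ev h' x then (1 : ℝ) else 0))
          = fun h' => (D h h' x).toReal from funext fun h' => by
            simp only [hDdef]; split_ifs <;> simp]
      exact integral_toReal_aux _ _ (hDsl h x) (fun h' => hD1 h h' x)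
    rw [show (fun h : Ω => ∫ h', (if ev h x ≠ ev h' x then (1 : ℝ) else 0) ∂Q)
        = fun h => (∫⁻ h', D h h' x ∂Q).toReal from funext inn]
    exact integral_toReal_aux _ _ (hDsl2 x)
      (fun h => lintegral_le_one_aux Q _ (fun h' => hD1 h h' x))
  have eD : ENNReal.ofReal ((1 / 2) * ∫ x, ∫ h, ∫ h',
        (if ev h x ≠ ev h' x then (1 : ℝ) else 0) ∂Q ∂Q ∂(PT.map Prod.fst))
      = (1/2 : ℝ≥0∞) * ∫⁻ x, DD x ∂(PT.map Prod.fst) := by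
    rw [show (fun x : X => ∫ h, ∫ h', (if ev h x ≠ ev h' x then (1 : ℝ) else 0) ∂Q ∂Q)
        = fun x => (DD x).toReal from funext hinnD,
      integral_toReal_aux _ DD hDDm hDD1,
      ENNReal.ofReal_mul (by norm_num : (0:ℝ) ≤ 1/2), hhalf, ENNReal.ofReal_toReal]
    exact ne_top_of_le_ne_top ENNReal.one_ne_top
      (lintegral_le_one_aux _ DD hDD1)
  have hinnJ : ∀ z : X × Bool, ∫ h, ∫ h',
      (if ev h z.1 ≠ z.2 ∧ ev h' z.1 ≠ z.2 then (1 : ℝ) else 0) ∂Q ∂Q = (JJ z).toReal := by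
    intro z
    have inn : ∀ h : Ω, ∫ h', (if ev h z.1 ≠ z.2 ∧ ev h' z.1 ≠ z.2 then (1 : ℝ) else 0) ∂Q
        = (∫⁻ h', J h h' z ∂Q).toReal := by
      intro h
      rw [show (fun h' : Ω => (if ev h z.1 ≠ z.2 ∧ ev h' z.1 ≠ z.2 then (1 : ℝ) else 0))
          = fun h' => (J h h' z).toReal from funext fun h' => by
            simp only [hJdef]; split_ifs <;> simp]
      exact integral_toReal_aux _ _ (hJsl h z) (fun h' => hJ1 h h' z)
    rw [show (fun h : Ω => ∫ h',
          (if ev h z.1 ≠ z.2 ∧ ev h' z.1 ≠ z.2 then (1 : ℝ) else 0) ∂Q)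
        = fun h => (∫⁻ h', J h h' z ∂Q).toReal from funext inn]
    exact integral_toReal_aux _ _ (hJsl2 z)
      (fun h => lintegral_le_one_aux Q _ (fun h' => hJ1 h h' z))
  have eJ : ENNReal.ofReal (∫ z, ∫ h, ∫ h',
        (if ev h z.1 ≠ z.2 ∧ ev h' z.1 ≠ z.2 then (1 : ℝ) else 0) ∂Q ∂Q ∂PS)
      = ∫⁻ z, JJ z ∂PS := by
    rw [show (fun z : X × Bool => ∫ h, ∫ h',
          (if ev h z.1 ≠ z.2 ∧ ev h' z.1 ≠ z.2 then (1 : ℝ) else 0) ∂Q ∂Q)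
        = fun z => (JJ z).toReal from funext hinnJ,
      integral_toReal_aux _ JJ hJJm hJJ1, ENNReal.ofReal_toReal]
    exact ne_top_of_le_ne_top ENNReal.one_ne_top (lintegral_le_one_aux _ JJ hJJ1)
  -- main decomposition
  have step1 : ∫⁻ z, Iz z ∂PT = (1/2 : ℝ≥0∞) * ∫⁻ z, DD z.1 ∂PT + ∫⁻ z, JJ z ∂PT := by
    rw [lintegral_congr hkeyI,
      lintegral_add_left (f := fun z : X × Bool => (1/2 : ℝ≥0∞) * DD z.1)
        (by exact (hDDm.comp measurable_fst).const_mul _),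
      lintegral_const_mul _ (by exact hDDm.comp measurable_fst : Measurable fun z : X × Bool => DD z.1)]
  have step2 : ∫⁻ z, DD z.1 ∂PT = ∫⁻ x, DD x ∂(PT.map Prod.fst) :=
    (lintegral_map hDDm measurable_fst).symm
  have step3 : ∫⁻ z, JJ z ∂PT = ∫⁻ z in A, JJ z ∂PT + ∫⁻ z in Aᶜ, JJ z ∂PT :=
    (lintegral_add_compl JJ hA).symm
  have step4 : ∫⁻ z in A, JJ z ∂PT ≤ essSup ρ PS * ∫⁻ z, JJ z ∂PS := by
    calc ∫⁻ z in A, JJ z ∂PT = ∫⁻ z, JJ z ∂(PS.withDensity ρ) := by rw [← hdens]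
    _ = ∫⁻ z, (ρ * JJ) z ∂PS := lintegral_withDensity_eq_lintegral_mul PS hρ hJJm
    _ ≤ ∫⁻ z, essSup ρ PS * JJ z ∂PS := by
        refine lintegral_mono_ae ?_
        filter_upwards [ENNReal.ae_le_essSup ρ] with z hz
        exact mul_le_mul_left hz _
    _ = essSup ρ PS * ∫⁻ z, JJ z ∂PS := lintegral_const_mul _ hJJm
  have hJJIz : ∀ z, JJ z ≤ Iz z := by
    intro z
    refine lintegral_mono fun h => ?_
    calc ∫⁻ h', J h h' z ∂Q ≤ ∫⁻ _, F h z ∂Q := lintegral_mono fun h' => hJF h h' z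
    _ = F h z := by simp
  have step5 : ∫⁻ z in Aᶜ, JJ z ∂PT ≤ ENNReal.ofReal ((PT Aᶜ).toReal *
      ⨆ h : Ω, ∫ z, (if ev h z.1 ≠ z.2 then (1 : ℝ) else 0) ∂(PT[|Aᶜ])) := by
    by_cases h0 : PT Aᶜ = 0
    · have : ∫⁻ z in Aᶜ, JJ z ∂PT ≤ PT Aᶜ := by
        calc ∫⁻ z in Aᶜ, JJ z ∂PT ≤ ∫⁻ _ in Aᶜ, 1 ∂PT := lintegral_mono fun z => hJJ1 z
        _ = PT Aᶜ := setLIntegral_one Aᶜ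
      exact le_trans (this.trans_eq h0) (by positivity)
    · have hct : PT Aᶜ ≠ ⊤ := measure_ne_top PT Aᶜ
      haveI : IsProbabilityMeasure (PT[|Aᶜ]) := cond_isProbabilityMeasure h0
      have hbdd : BddAbove (Set.range fun h : Ω =>
          ∫ z, (if ev h z.1 ≠ z.2 then (1 : ℝ) else 0) ∂(PT[|Aᶜ])) := by
        refine ⟨1, ?_⟩
        rintro _ ⟨h, rfl⟩
        simp only []
        rw [hconvF _ h]
        exact ENNReal.toReal_le_of_le_ofReal zero_le_one
          (by simpa using lintegral_le_one_aux _ _ (fun z => hF1 h z))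
      have hSle : ∀ h : Ω, ∫⁻ z, F h z ∂(PT[|Aᶜ]) ≤ ENNReal.ofReal
          (⨆ h : Ω, ∫ z, (if ev h z.1 ≠ z.2 then (1 : ℝ) else 0) ∂(PT[|Aᶜ])) := by
        intro h
        have h1 := le_ciSup hbdd h
        rw [hconvF _ h] at h1
        calc ∫⁻ z, F h z ∂(PT[|Aᶜ])
            = ENNReal.ofReal ((∫⁻ z, F h z ∂(PT[|Aᶜ])).toReal) := by
              rw [ENNReal.ofReal_toReal]
              exact ne_top_of_le_ne_top ENNReal.one_ne_top
                (lintegral_le_one_aux _ _ (fun z => hF1 h z))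
        _ ≤ _ := ENNReal.ofReal_le_ofReal h1
      have hrest : ∀ h : Ω, ∫⁻ z in Aᶜ, F h z ∂PT
          = PT Aᶜ * ∫⁻ z, F h z ∂(PT[|Aᶜ]) := by
        intro h
        rw [ProbabilityTheory.cond, lintegral_smul_measure, smul_eq_mul, ← mul_assoc,
          ENNReal.mul_inv_cancel h0 hct, one_mul]
      calc ∫⁻ z in Aᶜ, JJ z ∂PT ≤ ∫⁻ z in Aᶜ, Iz z ∂PT := lintegral_mono fun z => hJJIz z
      _ = ∫⁻ h, ∫⁻ z in Aᶜ, F h z ∂PT ∂Q :=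
          lintegral_lintegral_swap (f := fun z h => F h z)
            ((hFm.comp measurable_swap).aemeasurable)
      _ = ∫⁻ h, PT Aᶜ * ∫⁻ z, F h z ∂(PT[|Aᶜ]) ∂Q := lintegral_congr hrest
      _ ≤ ∫⁻ _, PT Aᶜ * ENNReal.ofReal
            (⨆ h : Ω, ∫ z, (if ev h z.1 ≠ z.2 then (1 : ℝ) else 0) ∂(PT[|Aᶜ])) ∂Q :=
          lintegral_mono fun h => mul_le_mul_right (hSle h) _
      _ = PT Aᶜ * ENNReal.ofReal
            (⨆ h : Ω, ∫ z, (if ev h z.1 ≠ z.2 then (1 : ℝ) else 0) ∂(PT[|Aᶜ])) := by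
          simp
      _ = ENNReal.ofReal ((PT Aᶜ).toReal *
            ⨆ h : Ω, ∫ z, (if ev h z.1 ≠ z.2 then (1 : ℝ) else 0) ∂(PT[|Aᶜ])) := by
          rw [ENNReal.ofReal_mul ENNReal.toReal_nonneg, ENNReal.ofReal_toReal hct]
  -- put everything together
  rw [eL, eD, eJ]
  calc ∫⁻ z, Iz z ∂PT
      = (1/2 : ℝ≥0∞) * ∫⁻ x, DD x ∂(PT.map Prod.fst)
        + (∫⁻ z in A, JJ z ∂PT + ∫⁻ z in Aᶜ, JJ z ∂PT) := by
        rw [step1, step2, step3]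
  _ ≤ (1/2 : ℝ≥0∞) * ∫⁻ x, DD x ∂(PT.map Prod.fst)
        + (essSup ρ PS * ∫⁻ z, JJ z ∂PS + ENNReal.ofReal ((PT Aᶜ).toReal *
            ⨆ h : Ω, ∫ z, (if ev h z.1 ≠ z.2 then (1 : ℝ) else 0) ∂(PT[|Aᶜ]))) :=
      add_le_add_right (add_le_add step4 step5) _
  _ = _ := by rw [← add_assoc]
end
end

section
/- Let P be a probability measure on X × Y, let H be a set of voters with a prior probability measure π on H, let ℓ : H × X × Y → [0,1] be a jointly measurable loss function, let c > 0 and δ ∈ (0,1]. Then with probability at least 1 − δ over the draw of an i.i.d. sample S = ((x_1,y_1),…,(x_m,y_m)) ∼ P^m, simultaneously for all probability measures Q on H: E_{(x,y)∼P} E_{h∼Q} ℓ(h,x,y) ≤ (c/(1−e^{−c})) · [ (1/m) Σ_{i=1}^m E_{h∼Q} ℓ(h,x_i,y_i) + (KL(Q‖π) + ln(1/δ)) / (m·c) ]. -/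
/-!
STATEMENT 2: PAC-Bayesian theorem (Theorem 4 of the paper, Catoni-style) for an
arbitrary `[0,1]`-valued loss.  `Y = {-1,1}` is encoded as `Bool`.
The Kullback–Leibler divergence is `ℝ≥0∞`-valued, equal to `∞` when `Q` is not
absolutely continuous w.r.t. `pr` (or the log-likelihood ratio is not integrable),
in which case the bound is vacuous; hence the inequality is stated in `ℝ≥0∞`.
-/

open MeasureTheory ProbabilityTheory Real
open scoped ENNReal Classical

noncomputable section

set_option maxHeartbeats 1000000

lemma aux_int_bdd {α : Type*} [MeasurableSpace α] (μ : Measure α) [IsFiniteMeasure μ]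
    {f : α → ℝ} (hf : Measurable f) {C : ℝ} (hb : ∀ x, |f x| ≤ C) : Integrable f μ :=
  ⟨hf.aestronglyMeasurable, HasFiniteIntegral.of_bounded (C := C)
    (ae_of_all μ (fun x => by simpa [Real.norm_eq_abs] using hb x))⟩

lemma dv_aux {Ω : Type*} [MeasurableSpace Ω] (pr Q : Measure Ω)
    [IsProbabilityMeasure pr] [IsProbabilityMeasure Q]
    (hac : Q ≪ pr) (hllr : Integrable (llr Q pr) Q)
    (F : Ω → ℝ) (hF : Measurable F) (B : ℝ) (hFb : ∀ h, |F h| ≤ B)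
    (K : ℝ) (hK : 0 < K)
    (hint : ∫⁻ h, ENNReal.ofReal (Real.exp (F h)) ∂pr ≤ ENNReal.ofReal K) :
    ∫ h, F h ∂Q ≤ (∫ h, llr Q pr h ∂Q) + Real.log K := by
  set g : Ω → ℝ := fun h => F h - llr Q pr h with hg
  have hgmeas : Measurable g := hF.sub (measurable_llr _ _)
  have hgint : Integrable g Q := (aux_int_bdd Q hF hFb).sub hllr
  -- key lintegral bound
  have hkey : ∫⁻ h, ENNReal.ofReal (Real.exp (g h)) ∂Q ≤ ENNReal.ofReal K := by
    have h1 : ∫⁻ h, ENNReal.ofReal (Real.exp (g h)) ∂Q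
        = ∫⁻ h, Q.rnDeriv pr h * ENNReal.ofReal (Real.exp (g h)) ∂pr := by
      exact (MeasureTheory.lintegral_rnDeriv_mul hac
        (hgmeas.exp.ennreal_ofReal.aemeasurable)).symm
    rw [h1]
    refine le_trans (lintegral_mono_ae ?_) hint
    filter_upwards [Measure.rnDeriv_lt_top Q pr] with h hlt
    by_cases h0 : Q.rnDeriv pr h = 0
    · simp [h0]
    · set t := (Q.rnDeriv pr h).toReal with htdef
      have ht : 0 < t := ENNReal.toReal_pos h0 hlt.ne
      have hd : Q.rnDeriv pr h = ENNReal.ofReal t := (ENNReal.ofReal_toReal hlt.ne).symm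
      have : Real.exp (g h) = Real.exp (F h) * t⁻¹ := by
        rw [hg]
        simp only [Real.exp_sub]
        rw [llr, Real.exp_log ht]
        ring
      have hone : Q.rnDeriv pr h * ENNReal.ofReal t⁻¹ = 1 := by
        rw [hd, ← ENNReal.ofReal_mul ht.le, mul_inv_cancel₀ ht.ne']
        simp
      rw [this, ENNReal.ofReal_mul (Real.exp_nonneg _), mul_left_comm, hone, mul_one]
  have hexpint : Integrable (fun h => Real.exp (g h)) Q := by
    refine ⟨(measurable_exp.comp hgmeas).aestronglyMeasurable, ?_⟩
    rw [HasFiniteIntegral]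
    calc ∫⁻ h, ‖Real.exp (g h)‖₊ ∂Q = ∫⁻ h, ENNReal.ofReal (Real.exp (g h)) ∂Q := by
          congr 1; funext h; exact Real.enorm_eq_ofReal (Real.exp_nonneg _)
      _ ≤ ENNReal.ofReal K := hkey
      _ < ∞ := ENNReal.ofReal_lt_top
  have hexple : ∫ h, Real.exp (g h) ∂Q ≤ K := by
    rw [← ENNReal.ofReal_le_ofReal_iff hK.le,
      ofReal_integral_eq_lintegral_ofReal hexpint (ae_of_all _ fun h => Real.exp_nonneg _)]
    exact hkey
  have hjensen : Real.exp (∫ h, g h ∂Q) ≤ ∫ h, Real.exp (g h) ∂Q := by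
    have := convexOn_exp.map_integral_le (μ := Q) (f := g)
      Real.continuous_exp.continuousOn isClosed_univ
      (ae_of_all _ fun _ => Set.mem_univ _) hgint ?_
    · simpa [Function.comp] using this
    · exact hexpint
  have : ∫ h, g h ∂Q ≤ Real.log K :=
    (Real.le_log_iff_exp_le hK).2 (hjensen.trans hexple)
  rw [hg] at this
  rw [integral_sub (aux_int_bdd Q hF hFb) hllr] at this
  linarith

/-- Kullback–Leibler divergence, `∞` in the degenerate cases. -/
def klDivergence {Ω : Type*} [MeasurableSpace Ω] (Q pr : Measure Ω) : ℝ≥0∞ :=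
  if Q ≪ pr ∧ Integrable (llr Q pr) Q then ENNReal.ofReal (∫ h, llr Q pr h ∂Q) else ∞

theorem pac_bayes_catoni_general_loss
    {X : Type*} [MeasurableSpace X] {Ω : Type*} [MeasurableSpace Ω]
    (P : Measure (X × Bool)) [IsProbabilityMeasure P]
    (pr : Measure Ω) [IsProbabilityMeasure pr]
    (ℓ : Ω → X → Bool → ℝ)
    (hℓmeas : Measurable (fun p : Ω × (X × Bool) => ℓ p.1 p.2.1 p.2.2))
    (hℓ0 : ∀ h x y, 0 ≤ ℓ h x y) (hℓ1 : ∀ h x y, ℓ h x y ≤ 1)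
    (m : ℕ) (c : ℝ) (hc : 0 < c) (δ : ℝ) (hδ0 : 0 < δ) (hδ1 : δ ≤ 1) :
    ENNReal.ofReal (1 - δ) ≤
      (Measure.pi fun _ : Fin m => P)
        {s | ∀ Q : Measure Ω, IsProbabilityMeasure Q →
          ENNReal.ofReal (∫ z, ∫ h, ℓ h z.1 z.2 ∂Q ∂P)
            ≤ ENNReal.ofReal (c / (1 - Real.exp (-c)))
                * (ENNReal.ofReal ((1 / (m : ℝ)) * ∑ i : Fin m, ∫ h, ℓ h (s i).1 (s i).2 ∂Q)
                   + (klDivergence Q pr + ENNReal.ofReal (Real.log (1 / δ)))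
                       / ENNReal.ofReal ((m : ℝ) * c))} := by
  classical
  have hec : Real.exp (-c) < 1 := Real.exp_lt_one_iff.2 (by linarith)
  have h1ec : 0 < 1 - Real.exp (-c) := by linarith
  have hcoef : 0 < c / (1 - Real.exp (-c)) := div_pos hc h1ec
  set Sm : Measure (Fin m → X × Bool) := Measure.pi fun _ : Fin m => P with hSmdef
  haveI : IsProbabilityMeasure Sm := by rw [hSmdef]; infer_instance
  by_cases hm : m = 0
  · subst hm
    rcases lt_or_ge δ 1 with hδlt | hδge
    · have hlog : 0 < Real.log (1 / δ) := by
        apply Real.log_pos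
        rw [lt_div_iff₀ hδ0]; linarith
      have hset : {s : Fin 0 → X × Bool | ∀ Q : Measure Ω, IsProbabilityMeasure Q →
          ENNReal.ofReal (∫ z, ∫ h, ℓ h z.1 z.2 ∂Q ∂P)
            ≤ ENNReal.ofReal (c / (1 - Real.exp (-c)))
                * (ENNReal.ofReal ((1 / ((0:ℕ) : ℝ)) * ∑ i : Fin 0, ∫ h, ℓ h (s i).1 (s i).2 ∂Q)
                   + (klDivergence Q pr + ENNReal.ofReal (Real.log (1 / δ)))
                       / ENNReal.ofReal (((0:ℕ) : ℝ) * c))} = Set.univ := by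
        ext s
        simp only [Set.mem_setOf_eq, Set.mem_univ, iff_true]
        intro Q hQ
        have hnum : klDivergence Q pr + ENNReal.ofReal (Real.log (1 / δ)) ≠ 0 :=
          ((ENNReal.ofReal_pos.2 hlog).trans_le le_add_self).ne'
        have hcoefne : ENNReal.ofReal (c / (1 - Real.exp (-c))) ≠ 0 :=
          (ENNReal.ofReal_pos.2 hcoef).ne'
        rw [show (((0:ℕ) : ℝ) * c) = 0 by simp, ENNReal.ofReal_zero,
          ENNReal.div_zero hnum]
        simp [ENNReal.mul_top, hcoefne]
      rw [hset]
      rw [measure_univ]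
      exact ENNReal.ofReal_le_one.2 (by linarith)
    · have : δ = 1 := le_antisymm hδ1 hδge
      subst this
      simp
  -- main case : m ≥ 1
  have hmpos : 0 < (m : ℝ) := by positivity
  -- the moment generating function of the loss
  set A : Ω → ℝ := fun h => ∫ z, Real.exp (-c * ℓ h z.1 z.2) ∂P with hAdef
  have hexpmeas : Measurable (fun p : Ω × (X × Bool) => Real.exp (-c * ℓ p.1 p.2.1 p.2.2)) :=
    (hℓmeas.const_mul (-c)).exp
  have hAmeas : Measurable A :=
    hexpmeas.stronglyMeasurable.integral_prod_right'.measurable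
  have hexple1 : ∀ h z, Real.exp (-c * ℓ h (Prod.fst z) (Prod.snd z)) ≤ 1 := by
    intro h z
    rw [show (1:ℝ) = Real.exp 0 by simp]
    apply Real.exp_le_exp.2
    have := hℓ0 h z.1 z.2
    nlinarith
  have hexpge : ∀ h z, Real.exp (-c) ≤ Real.exp (-c * ℓ h (Prod.fst z) (Prod.snd z)) := by
    intro h z
    apply Real.exp_le_exp.2
    have := hℓ1 h z.1 z.2
    nlinarith
  have hexpintP : ∀ h, Integrable (fun z : X × Bool => Real.exp (-c * ℓ h z.1 z.2)) P := by
    intro h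
    apply aux_int_bdd P (hexpmeas.comp (measurable_const.prodMk measurable_id)) (C := 1)
    intro z
    simp only [Function.comp_apply, id_eq]
    rw [abs_of_nonneg (Real.exp_nonneg _)]
    exact hexple1 h z
  have hApos : ∀ h, Real.exp (-c) ≤ A h := by
    intro h
    have := integral_mono (integrable_const (Real.exp (-c))) (hexpintP h) (hexpge h)
    simpa only [integral_const, measure_univ, ENNReal.toReal_one, probReal_univ, smul_eq_mul, one_mul,
      one_smul] using this
  have hAub : ∀ h, A h ≤ 1 := by
    intro h
    have := integral_mono (hexpintP h) (integrable_const 1) (hexple1 h)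
    simpa only [integral_const, measure_univ, ENNReal.toReal_one, probReal_univ, smul_eq_mul, one_mul,
      mul_one, one_smul] using this
  have hApos' : ∀ h, 0 < A h := fun h => lt_of_lt_of_le (Real.exp_pos _) (hApos h)
  have hlogA : ∀ h, |Real.log (A h)| ≤ c := by
    intro h
    rw [abs_le]
    constructor
    · calc -c = Real.log (Real.exp (-c)) := by rw [Real.log_exp]
        _ ≤ Real.log (A h) := Real.log_le_log (Real.exp_pos _) (hApos h)
    · calc Real.log (A h) ≤ A h - 1 := Real.log_le_sub_one_of_pos (hApos' h)
        _ ≤ c := by have := hAub h; nlinarith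
  -- true risk
  set L : Ω → ℝ := fun h => ∫ z, ℓ h z.1 z.2 ∂P with hLdef
  have hLmeas : Measurable L := hℓmeas.stronglyMeasurable.integral_prod_right'.measurable
  have hℓintP : ∀ h, Integrable (fun z : X × Bool => ℓ h z.1 z.2) P := by
    intro h
    apply aux_int_bdd P (hℓmeas.comp (measurable_const.prodMk measurable_id)) (C := 1)
    intro z
    simp only [Function.comp_apply, id_eq]
    rw [abs_le]
    exact ⟨by linarith [hℓ0 h z.1 z.2], hℓ1 h z.1 z.2⟩
  have hL0 : ∀ h, 0 ≤ L h := fun h => integral_nonneg (fun z => hℓ0 h z.1 z.2)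
  have hL1 : ∀ h, L h ≤ 1 := by
    intro h
    have := integral_mono (hℓintP h) (integrable_const 1) (fun z => hℓ1 h z.1 z.2)
    simpa using this
  -- exponential bound : A h ≤ 1 - (1 - e^{-c}) L h, hence log A h ≤ -(1-e^{-c}) L h
  have hptwise : ∀ (t : ℝ), 0 ≤ t → t ≤ 1 →
      Real.exp (-c * t) ≤ 1 - (1 - Real.exp (-c)) * t := by
    intro t ht0 ht1
    have := convexOn_exp.2 (Set.mem_univ (-c)) (Set.mem_univ (0:ℝ))
      ht0 (by linarith : (0:ℝ) ≤ 1 - t) (by ring)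
    simp only [smul_eq_mul, mul_zero, add_zero, Real.exp_zero] at this
    calc Real.exp (-c * t) = Real.exp (t * -c) := by ring_nf
      _ ≤ t * Real.exp (-c) + (1 - t) * 1 := this
      _ = 1 - (1 - Real.exp (-c)) * t := by ring
  have hlogAle : ∀ h, Real.log (A h) ≤ -(1 - Real.exp (-c)) * L h := by
    intro h
    have hAle : A h ≤ 1 - (1 - Real.exp (-c)) * L h := by
      have h1 : A h ≤ ∫ z, (1 - (1 - Real.exp (-c)) * ℓ h z.1 z.2) ∂P := by
        apply integral_mono (hexpintP h)
          ((integrable_const (1:ℝ)).sub ((hℓintP h).const_mul _))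
        intro z
        exact hptwise _ (hℓ0 h z.1 z.2) (hℓ1 h z.1 z.2)
      have h2 : ∫ z, (1 - (1 - Real.exp (-c)) * ℓ h z.1 z.2) ∂P
          = 1 - (1 - Real.exp (-c)) * L h := by
        rw [integral_sub (integrable_const _) ((hℓintP h).const_mul _),
          integral_const, integral_const_mul]
        simp [hLdef]
      linarith [h1, h2.le, h2.ge]
    calc Real.log (A h) ≤ A h - 1 := Real.log_le_sub_one_of_pos (hApos' h)
      _ ≤ -(1 - Real.exp (-c)) * L h := by linarith
    -- sample-level exponential moment functions
  set F : Ω → (Fin m → X × Bool) → ℝ :=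
    fun h s => (∑ i : Fin m, (-c * ℓ h (s i).1 (s i).2)) - (m : ℝ) * Real.log (A h) with hFdef
  set G : Ω → (Fin m → X × Bool) → ℝ := fun h s => Real.exp (F h s) with hGdef
  have hFb : ∀ h s, |F h s| ≤ (m : ℝ) * c + (m : ℝ) * c := by
    intro h s
    have h1 : |∑ i : Fin m, (-c * ℓ h (s i).1 (s i).2)| ≤ (m : ℝ) * c := by
      calc |∑ i : Fin m, (-c * ℓ h (s i).1 (s i).2)|
          ≤ ∑ i : Fin m, |(-c * ℓ h (s i).1 (s i).2)| := Finset.abs_sum_le_sum_abs _ _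
        _ ≤ ∑ _i : Fin m, c := by
            apply Finset.sum_le_sum
            intro i _
            rw [neg_mul, abs_neg, abs_mul, abs_of_nonneg hc.le, abs_of_nonneg (hℓ0 _ _ _)]
            nlinarith [hℓ1 h (s i).1 (s i).2, hℓ0 h (s i).1 (s i).2]
        _ = (m : ℝ) * c := by simp [mul_comm]
    have h2 : |(m : ℝ) * Real.log (A h)| ≤ (m : ℝ) * c := by
      rw [abs_mul, abs_of_nonneg hmpos.le]
      exact mul_le_mul_of_nonneg_left (hlogA h) hmpos.le
    calc |F h s| = |(∑ i : Fin m, (-c * ℓ h (s i).1 (s i).2)) +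
          (-((m : ℝ) * Real.log (A h)))| := by simp only [hFdef]; rw [sub_eq_add_neg]
      _ ≤ |∑ i : Fin m, (-c * ℓ h (s i).1 (s i).2)| + |(-((m : ℝ) * Real.log (A h)))| :=
          abs_add_le _ _
      _ ≤ (m : ℝ) * c + (m : ℝ) * c := by rw [abs_neg]; exact add_le_add h1 h2
  have hℓimeas : ∀ i : Fin m,
      Measurable (fun p : Ω × (Fin m → X × Bool) => ℓ p.1 (p.2 i).1 (p.2 i).2) := fun i =>
    hℓmeas.comp (measurable_fst.prodMk ((measurable_pi_apply i).comp measurable_snd))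
  have hGmeas : Measurable (fun p : Ω × (Fin m → X × Bool) => G p.1 p.2) := by
    apply Measurable.exp
    apply Measurable.sub
    · exact Finset.measurable_sum _ (fun i _ => (hℓimeas i).const_mul (-c))
    · exact (Real.measurable_log.comp (hAmeas.comp measurable_fst)).const_mul _
  -- Step A : for every fixed voter, the sample average of G is 1
  letI : MeasureSpace (X × Bool) := ⟨P⟩
  haveI : SigmaFinite (volume : Measure (X × Bool)) := inferInstanceAs (SigmaFinite P)
  have hvol : (volume : Measure (Fin m → X × Bool)) = Sm := rfl
  have hGeq : ∀ h s, G h s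
      = (∏ i : Fin m, Real.exp (-c * ℓ h (s i).1 (s i).2)) / (A h) ^ m := by
    intro h s
    rw [hGdef]
    simp only
    rw [hFdef]
    simp only
    rw [Real.exp_sub, Real.exp_sum, Real.exp_nat_mul, Real.exp_log (hApos' h)]
  have hGint1 : ∀ h, ∫ s, G h s ∂Sm = 1 := by
    intro h
    have e1 : ∫ s, G h s ∂Sm
        = (∫ s, (∏ i : Fin m, Real.exp (-c * ℓ h (s i).1 (s i).2)) ∂Sm) / (A h) ^ m := by
      rw [← integral_div]
      exact integral_congr_ae (ae_of_all _ (fun s => hGeq h s))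
    have e2 : ∫ s, (∏ i : Fin m, Real.exp (-c * ℓ h (s i).1 (s i).2)) ∂Sm = (A h) ^ m := by
      rw [hAdef, ← hvol]
      have := MeasureTheory.integral_fintype_prod_eq_pow (𝕜 := ℝ) (ι := Fin m) (μ := P)
        (fun z : X × Bool => Real.exp (-c * ℓ h z.1 z.2))
      rw [Fintype.card_fin] at this; exact this
    rw [e1, e2, div_self (pow_ne_zero m (hApos' h).ne')]
  have hGintS : ∀ h, Integrable (fun s => G h s) Sm := by
    intro h
    apply aux_int_bdd Sm (hGmeas.comp (measurable_const.prodMk measurable_id))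
      (C := Real.exp ((m : ℝ) * c + (m : ℝ) * c))
    intro s
    simp only [Function.comp_apply, id_eq]
    rw [hGdef]
    simp only
    rw [abs_of_nonneg (Real.exp_nonneg _)]
    exact Real.exp_le_exp.2 ((abs_le.1 (hFb h s)).2)
  have hGlint : ∀ h, ∫⁻ s, ENNReal.ofReal (G h s) ∂Sm = 1 := by
    intro h
    rw [← ofReal_integral_eq_lintegral_ofReal (hGintS h)
      (ae_of_all _ (fun s => by rw [hGdef]; exact Real.exp_nonneg _)), hGint1 h,
      ENNReal.ofReal_one]
  -- Step B : total mass
  have hswap : ∫⁻ s, (∫⁻ h, ENNReal.ofReal (G h s) ∂pr) ∂Sm = 1 := by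
    rw [lintegral_lintegral_swap ((hGmeas.comp measurable_swap).ennreal_ofReal.aemeasurable)]
    rw [lintegral_congr hGlint]
    simp
  -- Step C : Markov
  have hfmeas : Measurable fun s : Fin m → X × Bool => ∫⁻ h, ENNReal.ofReal (G h s) ∂pr :=
    Measurable.lintegral_prod_right' ((hGmeas.comp measurable_swap).ennreal_ofReal)
  have hδ' : (ENNReal.ofReal (1 / δ))⁻¹ = ENNReal.ofReal δ := by
    rw [one_div, ENNReal.ofReal_inv_of_pos hδ0, inv_inv]
  have hbadm : MeasurableSet
      {s : Fin m → X × Bool | ENNReal.ofReal (1 / δ) ≤ ∫⁻ h, ENNReal.ofReal (G h s) ∂pr} :=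
    measurableSet_le measurable_const hfmeas
  have hbadle :
      Sm {s : Fin m → X × Bool | ENNReal.ofReal (1 / δ) ≤ ∫⁻ h, ENNReal.ofReal (G h s) ∂pr}
        ≤ ENNReal.ofReal δ := by
    have hM := mul_meas_ge_le_lintegral₀ (μ := Sm) hfmeas.aemeasurable (ENNReal.ofReal (1 / δ))
    rw [hswap] at hM
    rw [← hδ']
    exact ENNReal.le_inv_iff_mul_le.2 (by rwa [mul_comm])
  have hcompl : ENNReal.ofReal (1 - δ) ≤
      Sm {s : Fin m → X × Bool |
        ENNReal.ofReal (1 / δ) ≤ ∫⁻ h, ENNReal.ofReal (G h s) ∂pr}ᶜ := by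
    rw [measure_compl hbadm (measure_ne_top _ _), measure_univ]
    calc ENNReal.ofReal (1 - δ) = 1 - ENNReal.ofReal δ := by
          rw [ENNReal.ofReal_sub _ hδ0.le, ENNReal.ofReal_one]
      _ ≤ 1 - Sm _ := tsub_le_tsub_left hbadle 1
  refine hcompl.trans (measure_mono ?_)
  intro s hs
  simp only [Set.mem_compl_iff, Set.mem_setOf_eq, not_le] at hs
  intro Q hQprob
  haveI := hQprob
  by_cases hQ : Q ≪ pr ∧ Integrable (llr Q pr) Q
  · -- nondegenerate KL
    obtain ⟨hac, hllrint⟩ := hQ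
    have hkl : klDivergence Q pr = ENNReal.ofReal (∫ h, llr Q pr h ∂Q) := by
      rw [klDivergence, if_pos ⟨hac, hllrint⟩]
    set KLr := ∫ h, llr Q pr h ∂Q with hKLdef
    have hKLr0 : 0 ≤ KLr := by
      have := dv_aux pr Q hac hllrint (fun _ => (0 : ℝ)) measurable_const 0
        (fun _ => by simp) 1 one_pos (by simp)
      simpa using this
    have hlog0 : 0 ≤ Real.log (1 / δ) := Real.log_nonneg ((le_div_iff₀ hδ0).2 (by linarith))
    -- measurability over Ω
    have hℓsmeas : ∀ z : X × Bool, Measurable fun h => ℓ h z.1 z.2 := fun z =>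
      hℓmeas.comp (measurable_id.prodMk measurable_const)
    have hℓsint : ∀ z : X × Bool, Integrable (fun h => ℓ h z.1 z.2) Q := fun z =>
      aux_int_bdd Q (hℓsmeas z) (C := 1)
        (fun h => abs_le.2 ⟨by linarith [hℓ0 h z.1 z.2], hℓ1 h z.1 z.2⟩)
    have hlogAint : Integrable (fun h => Real.log (A h)) Q :=
      aux_int_bdd Q (Real.measurable_log.comp hAmeas) (C := c) hlogA
    have hLint : Integrable L Q :=
      aux_int_bdd Q hLmeas (C := 1) (fun h => abs_le.2 ⟨by linarith [hL0 h], hL1 h⟩)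
    have hFmeas : Measurable fun h => F h s := by
      rw [hFdef]
      apply Measurable.sub
      · exact Finset.measurable_sum _ (fun i _ => (hℓsmeas (s i)).const_mul (-c))
      · exact (Real.measurable_log.comp hAmeas).const_mul _
    -- change of measure
    have hsle : ∫⁻ h, ENNReal.ofReal (Real.exp (F h s)) ∂pr ≤ ENNReal.ofReal (1 / δ) := by
      refine le_of_lt ?_
      exact hs
    have hdv : ∫ h, F h s ∂Q ≤ KLr + Real.log (1 / δ) :=
      dv_aux pr Q hac hllrint (fun h => F h s) hFmeas _ (fun h => hFb h s) (1 / δ)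
        (by positivity) hsle
    -- expand the integral of F
    have hsumint : Integrable (fun h => ∑ i : Fin m, (-c * ℓ h (s i).1 (s i).2)) Q :=
      integrable_finset_sum _ (fun i _ => (hℓsint (s i)).const_mul _)
    have hFexp : ∫ h, F h s ∂Q
        = (∑ i : Fin m, (-c * ∫ h, ℓ h (s i).1 (s i).2 ∂Q))
          - (m : ℝ) * ∫ h, Real.log (A h) ∂Q := by
      rw [hFdef]
      simp only
      rw [integral_sub hsumint (hlogAint.const_mul _),
        integral_finset_sum _ (fun i _ => (hℓsint (s i)).const_mul _),
        integral_const_mul]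
      simp_rw [integral_const_mul]
    have hlogAQ : ∫ h, Real.log (A h) ∂Q ≤ -(1 - Real.exp (-c)) * ∫ h, L h ∂Q := by
      have := integral_mono hlogAint (hLint.const_mul _) hlogAle
      rwa [integral_const_mul] at this
    -- Fubini for the true risk
    have huncint : Integrable
        (Function.uncurry fun (z : X × Bool) (h : Ω) => ℓ h z.1 z.2) (P.prod Q) := by
      apply aux_int_bdd _ (hℓmeas.comp (measurable_snd.prodMk measurable_fst)) (C := 1)
      intro p
      simp only [Function.comp_apply]
      exact abs_le.2 ⟨by linarith [hℓ0 p.2 p.1.1 p.1.2], hℓ1 p.2 p.1.1 p.1.2⟩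
    have hswapE : ∫ z, ∫ h, ℓ h z.1 z.2 ∂Q ∂P = ∫ h, L h ∂Q := by
      rw [hLdef]
      exact integral_integral_swap huncint
    set Su := ∑ i : Fin m, ∫ h, ℓ h (s i).1 (s i).2 ∂Q with hSudef
    have hSu0 : 0 ≤ Su :=
      Finset.sum_nonneg fun i _ => integral_nonneg (fun h => hℓ0 h (s i).1 (s i).2)
    have hsumeq : ∑ i : Fin m, (-c * ∫ h, ℓ h (s i).1 (s i).2 ∂Q) = -c * Su := by
      rw [hSudef, Finset.mul_sum]
    rw [hsumeq] at hFexp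
    set EQ := ∫ h, L h ∂Q with hEQdef
    have hbridge : (m : ℝ) * (-(1 - Real.exp (-c)) * EQ)
        = -((m : ℝ) * (1 - Real.exp (-c)) * EQ) := by ring
    have hm2 : (m : ℝ) * ∫ h, Real.log (A h) ∂Q ≤ (m : ℝ) * (-(1 - Real.exp (-c)) * EQ) :=
      mul_le_mul_of_nonneg_left hlogAQ hmpos.le
    have key : (m : ℝ) * (1 - Real.exp (-c)) * EQ ≤ c * Su + (KLr + Real.log (1 / δ)) := by
      have hF1 := hFexp.le
      have hF2 := hFexp.ge
      linarith [hdv, hm2, hbridge.le, hbridge.ge]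
    have h2 : EQ ≤ (c * Su + (KLr + Real.log (1 / δ))) / ((m : ℝ) * (1 - Real.exp (-c))) :=
      (le_div_iff₀ (by positivity)).2 (by linarith [key])
    have h3 : (c * Su + (KLr + Real.log (1 / δ))) / ((m : ℝ) * (1 - Real.exp (-c)))
        = (c / (1 - Real.exp (-c)))
          * ((1 / (m : ℝ)) * Su + (KLr + Real.log (1 / δ)) / ((m : ℝ) * c)) := by
      field_simp
    have hreal : ∫ z, ∫ h, ℓ h z.1 z.2 ∂Q ∂P
        ≤ (c / (1 - Real.exp (-c)))
          * ((1 / (m : ℝ)) * Su + (KLr + Real.log (1 / δ)) / ((m : ℝ) * c)) := by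
      rw [hswapE]
      linarith [h2, h3.le, h3.ge]
    rw [hkl]
    rw [← ENNReal.ofReal_add hKLr0 hlog0, ← ENNReal.ofReal_div_of_pos (by positivity),
      ← ENNReal.ofReal_add (by positivity) (div_nonneg (by linarith) (by positivity)),
      ← ENNReal.ofReal_mul hcoef.le]
    exact ENNReal.ofReal_le_ofReal hreal
  · -- degenerate KL : the right-hand side is infinite
    have hkl : klDivergence Q pr = ∞ := by rw [klDivergence, if_neg hQ]
    rw [hkl, top_add, ENNReal.top_div_of_ne_top ENNReal.ofReal_ne_top, add_top,
      ENNReal.mul_top ((ENNReal.ofReal_pos.2 hcoef).ne')]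
    exact le_top
end
end

section
/- Let D_T be a probability measure on X, let H be a set of measurable classifiers with prior probability measure π on H, let c > 0 and δ ∈ (0,1]. Then with probability at least 1 − δ over the draw of an i.i.d. sample T = (x'_1,…,x'_{m_t}) ∼ (D_T)^{m_t}, simultaneously for all posteriors Q on H: d_{D_T}(Q) ≤ (c/(1−e^{−c})) · [ d̂_T(Q) + (2·KL(Q‖π) + ln(1/δ)) / (m_t·c) ], where d̂_T(Q) = (1/m_t) Σ_{i=1}^{m_t} E_{h∼Q} E_{h'∼Q} 1[h(x'_i) ≠ h'(x'_i)] is the empirical expected disagreement. -/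
/-!
STATEMENT 3: PAC-Bayesian generalization bound for the expected disagreement
(first part of Corollary 5 of the paper).  Classifiers are indexed by a
measurable space `Ω` through the evaluation map `ev`; `Y = {-1,1}` is `Bool`.
The KL divergence is `ℝ≥0∞`-valued (`∞` in degenerate cases), so the inequality
is stated in `ℝ≥0∞`.
-/

open MeasureTheory ProbabilityTheory Real
open scoped ENNReal Classical

noncomputable section

namespace PacBayesAux

variable {α : Type*} [MeasurableSpace α]

lemma integrable_of_bound (μ : Measure α) [IsFiniteMeasure μ] {f : α → ℝ}
    (hmeas : AEStronglyMeasurable f μ) (B : ℝ) (h : ∀ x, |f x| ≤ B) :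
    Integrable f μ :=
  Integrable.mono' (integrable_const B) hmeas
    (Filter.Eventually.of_forall fun x => by simpa [Real.norm_eq_abs] using h x)

lemma abs_integral_le (μ : Measure α) [IsProbabilityMeasure μ] {f : α → ℝ}
    {B : ℝ} (h : ∀ x, |f x| ≤ B) : |∫ x, f x ∂μ| ≤ B := by
  have := MeasureTheory.norm_integral_le_of_norm_le_const (μ := μ) (f := f) (C := B)
    (Filter.Eventually.of_forall fun x => by simpa [Real.norm_eq_abs] using h x)
  simpa [Real.norm_eq_abs, measure_univ] using this

lemma exp_integral_pos (μ : Measure α) [IsProbabilityMeasure μ] {g : α → ℝ}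
    (hint : Integrable (fun x => Real.exp (g x)) μ) :
    0 < ∫ x, Real.exp (g x) ∂μ := by
  rw [integral_pos_iff_support_of_nonneg (fun x => (Real.exp_pos _).le) hint]
  have hs : Function.support (fun x => Real.exp (g x)) = Set.univ :=
    Set.eq_univ_of_forall fun x => (Real.exp_pos _).ne'
  rw [hs]
  simp [measure_univ]

/-- One-sided change of measure (Donsker–Varadhan inequality). -/
lemma change_of_measure {P Q : Measure α} [IsProbabilityMeasure P] [IsProbabilityMeasure Q]
    (hQP : Q ≪ P) (hllr : Integrable (llr Q P) Q) {f : α → ℝ} (hf : Measurable f)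
    {B : ℝ} (hB : ∀ x, |f x| ≤ B) :
    ∫ x, f x ∂Q ≤ ∫ x, llr Q P x ∂Q + Real.log (∫ x, Real.exp (f x) ∂P) := by
  have hfI : Integrable f Q := integrable_of_bound Q hf.aestronglyMeasurable B hB
  have hexpB : ∀ x, |Real.exp (f x)| ≤ Real.exp B := fun x => by
    rw [abs_of_pos (Real.exp_pos _)]
    exact Real.exp_le_exp.2 ((abs_le.1 (hB x)).2)
  have hefP : Integrable (fun x => Real.exp (f x)) P :=
    integrable_of_bound P (hf.exp).aestronglyMeasurable _ hexpB
  set g : α → ℝ := fun x => f x - llr Q P x with hg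
  have hgmeas : Measurable fun x => Real.exp (g x) := (hf.sub (measurable_llr Q P)).exp
  -- key lintegral estimate
  have hkey : ∫⁻ x, ENNReal.ofReal (Real.exp (g x)) ∂Q
      ≤ ∫⁻ x, ENNReal.ofReal (Real.exp (f x)) ∂P := by
    conv_lhs => rw [← Measure.withDensity_rnDeriv_eq Q P hQP]
    rw [lintegral_withDensity_eq_lintegral_mul P (Measure.measurable_rnDeriv Q P)
      (hgmeas.ennreal_ofReal)]
    refine lintegral_mono_ae ?_
    filter_upwards [Measure.rnDeriv_lt_top Q P] with x hx
    rcases eq_or_ne (Q.rnDeriv P x) 0 with h0 | h0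
    · simp [h0]
    · have hrt : 0 < (Q.rnDeriv P x).toReal := ENNReal.toReal_pos h0 hx.ne
      have : Real.exp (g x) = Real.exp (f x) * ((Q.rnDeriv P x).toReal)⁻¹ := by
        rw [hg]
        simp only [llr_def]
        rw [Real.exp_sub, Real.exp_log hrt]
        ring
      simp only [Pi.mul_apply, this]
      rw [ENNReal.ofReal_mul (Real.exp_pos _).le]
      rw [ENNReal.ofReal_inv_of_pos hrt, ENNReal.ofReal_toReal hx.ne]
      calc Q.rnDeriv P x * (ENNReal.ofReal (Real.exp (f x)) * (Q.rnDeriv P x)⁻¹)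
          = ENNReal.ofReal (Real.exp (f x)) * (Q.rnDeriv P x * (Q.rnDeriv P x)⁻¹) := by ring
        _ ≤ ENNReal.ofReal (Real.exp (f x)) := by
            rw [ENNReal.mul_inv_cancel h0 hx.ne]; simp
  have hfin : ∫⁻ x, ENNReal.ofReal (Real.exp (f x)) ∂P < ⊤ := by
    calc ∫⁻ x, ENNReal.ofReal (Real.exp (f x)) ∂P
        ≤ ∫⁻ _, ENNReal.ofReal (Real.exp B) ∂P := by
          refine lintegral_mono fun x => ENNReal.ofReal_le_ofReal ?_
          exact (abs_le.1 (hexpB x)).2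
      _ = ENNReal.ofReal (Real.exp B) := by simp [measure_univ]
      _ < ⊤ := ENNReal.ofReal_lt_top
  have hJint : Integrable (fun x => Real.exp (g x)) Q := by
    refine ⟨hgmeas.aestronglyMeasurable, ?_⟩
    rw [hasFiniteIntegral_iff_norm]
    calc ∫⁻ x, ENNReal.ofReal ‖Real.exp (g x)‖ ∂Q
        = ∫⁻ x, ENNReal.ofReal (Real.exp (g x)) ∂Q := by
          simp [Real.norm_eq_abs, abs_of_pos (Real.exp_pos _)]
      _ ≤ _ := hkey
      _ < ⊤ := hfin
  set J : ℝ := ∫ x, Real.exp (g x) ∂Q with hJ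
  have hJpos : 0 < J := exp_integral_pos Q hJint
  have hJle : J ≤ ∫ x, Real.exp (f x) ∂P := by
    rw [hJ, integral_eq_lintegral_of_nonneg_ae (Filter.Eventually.of_forall fun x => (Real.exp_pos _).le)
      hgmeas.aestronglyMeasurable,
      integral_eq_lintegral_of_nonneg_ae (Filter.Eventually.of_forall fun x => (Real.exp_pos _).le)
      (hf.exp).aestronglyMeasurable]
    exact ENNReal.toReal_mono hfin.ne hkey
  -- Jensen-type step via x ≤ eˣ - 1
  have hstep : ∫ x, g x ∂Q ≤ Real.log J := by
    have hptwise : ∀ x, g x - Real.log J ≤ Real.exp (g x) / J - 1 := by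
      intro x
      have h1 := Real.add_one_le_exp (g x - Real.log J)
      rw [Real.exp_sub, Real.exp_log hJpos] at h1
      linarith
    have hgI : Integrable g Q := hfI.sub hllr
    have hlhsI : Integrable (fun x => g x - Real.log J) Q := hgI.sub (integrable_const _)
    have hrhsI : Integrable (fun x => Real.exp (g x) / J - 1) Q :=
      (hJint.div_const J).sub (integrable_const 1)
    have := integral_mono hlhsI hrhsI hptwise
    rw [integral_sub hgI (integrable_const _), integral_sub (hJint.div_const J)
      (integrable_const 1), integral_div] at this
    simp only [integral_const, measure_univ, ENNReal.toReal_one, probReal_univ, one_smul, smul_eq_mul,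
      one_mul] at this
    rw [← hJ, div_self hJpos.ne'] at this
    linarith
  have hgint : ∫ x, g x ∂Q = ∫ x, f x ∂Q - ∫ x, llr Q P x ∂Q := integral_sub hfI hllr
  have hlog : Real.log J ≤ Real.log (∫ x, Real.exp (f x) ∂P) := Real.log_le_log hJpos hJle
  linarith [hstep, hgint.symm.le, hgint.le, hlog]

/-- Two-level change of measure for functions of a pair. -/
lemma change_of_measure2 {Ω : Type*} [MeasurableSpace Ω] {P Q : Measure Ω}
    [IsProbabilityMeasure P] [IsProbabilityMeasure Q]
    (hQP : Q ≪ P) (hllr : Integrable (llr Q P) Q) {f : Ω × Ω → ℝ} (hf : Measurable f)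
    {B : ℝ} (hB : ∀ x, |f x| ≤ B) :
    ∫ h, ∫ h', f (h, h') ∂Q ∂Q
      ≤ 2 * ∫ x, llr Q P x ∂Q + Real.log (∫ h, ∫ h', Real.exp (f (h, h')) ∂P ∂P) := by
  set K : ℝ := ∫ x, llr Q P x ∂Q with hK
  have hfh : ∀ h : Ω, Measurable (fun h' => f (h, h')) := fun h =>
    hf.comp measurable_prodMk_left
  have hexpB : ∀ p : Ω × Ω, |Real.exp (f p)| ≤ Real.exp B := fun p => by
    rw [abs_of_pos (Real.exp_pos _)]
    exact Real.exp_le_exp.2 ((abs_le.1 (hB p)).2)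
  have hintexp : ∀ h : Ω, Integrable (fun h' => Real.exp (f (h, h'))) P := fun h =>
    integrable_of_bound P ((hfh h).exp).aestronglyMeasurable _ (fun h' => hexpB (h, h'))
  -- the inner log-partition function
  set G : Ω → ℝ := fun h => Real.log (∫ h', Real.exp (f (h, h')) ∂P) with hG
  have hinnerpos : ∀ h, 0 < ∫ h', Real.exp (f (h, h')) ∂P := fun h =>
    exp_integral_pos P (hintexp h)
  have hinnerle : ∀ h, ∫ h', Real.exp (f (h, h')) ∂P ≤ Real.exp B := fun h => by
    have := abs_integral_le P (fun h' => hexpB (h, h'))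
    exact (abs_le.1 this).2
  have hinnerge : ∀ h, Real.exp (-B) ≤ ∫ h', Real.exp (f (h, h')) ∂P := fun h => by
    have hmono : ∀ h', Real.exp (-B) ≤ Real.exp (f (h, h')) := fun h' =>
      Real.exp_le_exp.2 (neg_le_of_abs_le (hB (h, h')))
    calc Real.exp (-B) = ∫ _, Real.exp (-B) ∂P := by simp [measure_univ]
      _ ≤ ∫ h', Real.exp (f (h, h')) ∂P := integral_mono (integrable_const _) (hintexp h) hmono
  have hGbound : ∀ h, |G h| ≤ B := fun h => by
    rw [abs_le]
    constructor
    · have := Real.log_le_log (Real.exp_pos (-B)) (hinnerge h)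
      rwa [Real.log_exp] at this
    · have := Real.log_le_log (hinnerpos h) (hinnerle h)
      rwa [Real.log_exp] at this
  have hGmeas : Measurable G := by
    have h1 : StronglyMeasurable fun h => ∫ h', Real.exp (f (h, h')) ∂P :=
      (Real.measurable_exp.comp hf).stronglyMeasurable.integral_prod_right'
    exact Real.measurable_log.comp h1.measurable
  -- inner application
  have hinner : ∀ h, ∫ h', f (h, h') ∂Q ≤ K + G h := fun h =>
    change_of_measure hQP hllr (hfh h) (fun h' => hB (h, h'))
  -- outer application to G
  have houter : ∫ h, G h ∂Q ≤ K + Real.log (∫ h, Real.exp (G h) ∂P) :=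
    change_of_measure hQP hllr hGmeas hGbound
  -- identification of exp (G h)
  have hexpG : ∀ h, Real.exp (G h) = ∫ h', Real.exp (f (h, h')) ∂P := fun h =>
    Real.exp_log (hinnerpos h)
  -- assemble
  have hφmeas : StronglyMeasurable fun h => ∫ h', f (h, h') ∂Q :=
    hf.stronglyMeasurable.integral_prod_right'
  have hφbd : ∀ h, |∫ h', f (h, h') ∂Q| ≤ B := fun h =>
    abs_integral_le Q (fun h' => hB (h, h'))
  have hφI : Integrable (fun h => ∫ h', f (h, h') ∂Q) Q :=
    integrable_of_bound Q hφmeas.aestronglyMeasurable B hφbd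
  have hGI : Integrable G Q := integrable_of_bound Q hGmeas.aestronglyMeasurable B hGbound
  have h1 : ∫ h, ∫ h', f (h, h') ∂Q ∂Q ≤ ∫ h, (K + G h) ∂Q :=
    integral_mono hφI ((integrable_const K).add hGI) hinner
  have h2 : ∫ h, (K + G h) ∂Q = K + ∫ h, G h ∂Q := by
    rw [integral_add (integrable_const K) hGI, integral_const]
    simp [measure_univ]
  have h3 : Real.log (∫ h, Real.exp (G h) ∂P) =
      Real.log (∫ h, ∫ h', Real.exp (f (h, h')) ∂P ∂P) := by
    congr 1
    exact integral_congr_ae (Filter.Eventually.of_forall hexpG)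
  calc ∫ h, ∫ h', f (h, h') ∂Q ∂Q ≤ K + ∫ h, G h ∂Q := by rw [← h2]; exact h1
    _ ≤ K + (K + Real.log (∫ h, Real.exp (G h) ∂P)) := by linarith [houter]
    _ = 2 * K + Real.log (∫ h, ∫ h', Real.exp (f (h, h')) ∂P ∂P) := by rw [h3]; ring

variable {X : Type*} [MeasurableSpace X] {Ω : Type*} [MeasurableSpace Ω]

/-- The disagreement loss of a pair of classifiers. -/
def dis (ev : Ω → X → Bool) : Ω × Ω → X → ℝ := fun p x => if ev p.1 x ≠ ev p.2 x then 1 else 0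

lemma dis_nonneg (ev : Ω → X → Bool) (p : Ω × Ω) (x : X) : 0 ≤ dis ev p x := by
  unfold dis; split <;> norm_num

lemma dis_le_one (ev : Ω → X → Bool) (p : Ω × Ω) (x : X) : dis ev p x ≤ 1 := by
  unfold dis; split <;> norm_num

lemma abs_dis_le_one (ev : Ω → X → Bool) (p : Ω × Ω) (x : X) : |dis ev p x| ≤ 1 := by
  rw [abs_le]; exact ⟨by nlinarith [dis_nonneg ev p x], dis_le_one ev p x⟩

lemma meas_dis {ev : Ω → X → Bool} (hev : Measurable (Function.uncurry ev)) :
    Measurable fun q : (Ω × Ω) × X => dis ev q.1 q.2 := by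
  have hu : Measurable fun q : (Ω × Ω) × X => ev q.1.1 q.2 :=
    hev.comp ((measurable_fst.fst).prodMk measurable_snd)
  have hv : Measurable fun q : (Ω × Ω) × X => ev q.1.2 q.2 :=
    hev.comp ((measurable_fst.snd).prodMk measurable_snd)
  have hset : MeasurableSet {q : (Ω × Ω) × X | ev q.1.1 q.2 ≠ ev q.1.2 q.2} := by
    have heq : {q : (Ω × Ω) × X | ev q.1.1 q.2 ≠ ev q.1.2 q.2}
        = (fun q : (Ω × Ω) × X => (ev q.1.1 q.2, ev q.1.2 q.2)) ⁻¹'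
          {p : Bool × Bool | p.1 ≠ p.2} := rfl
    rw [heq]
    exact (hu.prodMk hv) ((Set.to_countable _).measurableSet)
  exact Measurable.ite hset measurable_const measurable_const

lemma dis_integrable_x {ev : Ω → X → Bool} (hev : Measurable (Function.uncurry ev))
    (DT : Measure X) [IsProbabilityMeasure DT] (p : Ω × Ω) :
    Integrable (dis ev p) DT :=
  integrable_of_bound DT (((meas_dis hev).comp measurable_prodMk_left).aestronglyMeasurable)
    1 (abs_dis_le_one ev p)

lemma meanDis_nonneg {ev : Ω → X → Bool} (DT : Measure X) (p : Ω × Ω) :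
    0 ≤ ∫ x, dis ev p x ∂DT :=
  integral_nonneg (dis_nonneg ev p)

lemma meanDis_le_one {ev : Ω → X → Bool} (hev : Measurable (Function.uncurry ev))
    (DT : Measure X) [IsProbabilityMeasure DT] (p : Ω × Ω) :
    ∫ x, dis ev p x ∂DT ≤ 1 :=
  (abs_le.1 (abs_integral_le DT (abs_dis_le_one ev p))).2

/-- The sample-side moment generating function bound. -/
lemma step_exp_bound {ev : Ω → X → Bool} (hev : Measurable (Function.uncurry ev))
    (DT : Measure X) [IsProbabilityMeasure DT] (mt : ℕ) {c : ℝ} (hc : 0 < c) (p : Ω × Ω) :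
    ∫ T : Fin mt → X, Real.exp ((mt : ℝ) * (1 - Real.exp (-c)) * (∫ x, dis ev p x ∂DT)
        - c * ∑ i, dis ev p (T i)) ∂(Measure.pi fun _ : Fin mt => DT) ≤ 1 := by
  letI : MeasureSpace X := ⟨DT⟩
  set t : ℝ := 1 - Real.exp (-c) with htdef
  have ht0 : 0 < t := by
    have : Real.exp (-c) < 1 := Real.exp_lt_one_iff.2 (by linarith)
    simp only [htdef]; linarith
  have ht1 : t < 1 := by
    have := Real.exp_pos (-c); simp only [htdef]; linarith
  set R : ℝ := ∫ x, dis ev p x ∂DT with hRdef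
  have hR0 : 0 ≤ R := meanDis_nonneg DT p
  have hR1 : R ≤ 1 := meanDis_le_one hev DT p
  have hPi : (Measure.pi fun _ : Fin mt => DT) = (volume : Measure (Fin mt → X)) :=
    (volume_pi (ι := Fin mt)).symm
  rw [hPi]
  -- factor the integrand as a product
  have hfac : ∀ T : Fin mt → X, Real.exp ((mt : ℝ) * t * R - c * ∑ i, dis ev p (T i))
      = ∏ i : Fin mt, Real.exp (t * R - c * dis ev p (T i)) := by
    intro T
    rw [← Real.exp_sum]
    congr 1
    rw [Finset.sum_sub_distrib, Finset.sum_const, ← Finset.mul_sum]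
    simp [mul_assoc, mul_comm, mul_left_comm]
  simp only [hfac]
  rw [MeasureTheory.integral_fintype_prod_volume_eq_pow (𝕜 := ℝ) (ι := Fin mt)
    (fun x => Real.exp (t * R - c * dis ev p x))]
  simp only [Fintype.card_fin]
  -- compute the single-coordinate integral
  have hpt : ∀ x : X, Real.exp (t * R - c * dis ev p x)
      = Real.exp (t * R) * (1 - t * dis ev p x) := by
    intro x
    rw [Real.exp_sub]
    unfold dis
    split
    · rw [mul_one, mul_one]
      have h2 : (1:ℝ) - t = Real.exp (-c) := by simp [htdef]
      rw [h2, Real.exp_neg, div_eq_mul_inv]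
    · simp
  simp only [hpt]
  have hdisint : Integrable (dis ev p) (volume : Measure X) := dis_integrable_x hev DT p
  rw [MeasureTheory.integral_const_mul]
  have hint2 : ∫ x, (1 - t * dis ev p x) ∂(volume : Measure X) = 1 - t * R := by
    rw [integral_sub (integrable_const 1) (hdisint.const_mul t), MeasureTheory.integral_const_mul]
    have hRR : ∫ (a : X), dis ev p a = R := rfl
    rw [hRR]
    simp [measure_univ]
  rw [hint2]
  -- now `(exp (t R) * (1 - t R)) ^ mt ≤ 1`
  have hbase0 : 0 ≤ Real.exp (t * R) * (1 - t * R) := by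
    have : t * R ≤ t := by nlinarith
    have : t * R < 1 := lt_of_le_of_lt this ht1
    nlinarith [Real.exp_pos (t * R)]
  have hbase1 : Real.exp (t * R) * (1 - t * R) ≤ 1 := by
    have h1 := Real.add_one_le_exp (-(t * R))
    have h2 : Real.exp (t * R) * Real.exp (-(t * R)) = 1 := by
      rw [← Real.exp_add]; simp
    nlinarith [Real.exp_pos (t * R)]
  calc (Real.exp (t * R) * (1 - t * R)) ^ mt ≤ 1 ^ mt := pow_le_pow_left₀ hbase0 hbase1 mt
    _ = 1 := one_pow mt

end PacBayesAux

theorem pac_bayes_disagreement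
    {X : Type*} [MeasurableSpace X] {Ω : Type*} [MeasurableSpace Ω]
    (ev : Ω → X → Bool) (hev : Measurable (Function.uncurry ev))
    (DT : Measure X) [IsProbabilityMeasure DT]
    (pr : Measure Ω) [IsProbabilityMeasure pr]
    (mt : ℕ) (c : ℝ) (hc : 0 < c) (δ : ℝ) (hδ0 : 0 < δ) (hδ1 : δ ≤ 1) :
    ENNReal.ofReal (1 - δ) ≤
      (Measure.pi fun _ : Fin mt => DT)
        {T | ∀ Q : Measure Ω, IsProbabilityMeasure Q →
          -- d_{D_T}(Q) ≤ c/(1-e^{-c}) [ d̂_T(Q) + (2 KL(Q‖π) + ln(1/δ)) / (m_t c) ]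
          ENNReal.ofReal (∫ x, ∫ h, ∫ h',
              (if ev h x ≠ ev h' x then (1 : ℝ) else 0) ∂Q ∂Q ∂DT)
            ≤ ENNReal.ofReal (c / (1 - Real.exp (-c)))
                * (ENNReal.ofReal ((1 / (mt : ℝ)) * ∑ i : Fin mt, ∫ h, ∫ h',
                      (if ev h (T i) ≠ ev h' (T i) then (1 : ℝ) else 0) ∂Q ∂Q)
                   + (2 * klDivergence Q pr + ENNReal.ofReal (Real.log (1 / δ)))
                       / ENNReal.ofReal ((mt : ℝ) * c))} := by
  classical
  set t : ℝ := 1 - Real.exp (-c) with htdef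
  have ht0 : 0 < t := by
    have : Real.exp (-c) < 1 := Real.exp_lt_one_iff.2 (by linarith)
    rw [htdef]; linarith
  have hA0 : (0 : ℝ) < c / t := div_pos hc ht0
  rcases eq_or_lt_of_le hδ1 with hδeq | hδlt
  · rw [hδeq]; simp
  have hLpos : 0 < Real.log (1 / δ) := by
    apply Real.log_pos
    rw [lt_div_iff₀ hδ0]; linarith
  set L : ℝ := Real.log (1 / δ) with hLdef
  -- degenerate case `mt = 0`
  rcases Nat.eq_zero_or_pos mt with hmt0 | hmtpos
  · subst hmt0
    have hsub : Set.univ ⊆ {T : Fin 0 → X | ∀ Q : Measure Ω, IsProbabilityMeasure Q →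
        ENNReal.ofReal (∫ x, ∫ h, ∫ h',
            (if ev h x ≠ ev h' x then (1 : ℝ) else 0) ∂Q ∂Q ∂DT)
          ≤ ENNReal.ofReal (c / t)
              * (ENNReal.ofReal ((1 / ((0:ℕ) : ℝ)) * ∑ i : Fin 0, ∫ h, ∫ h',
                    (if ev h (T i) ≠ ev h' (T i) then (1 : ℝ) else 0) ∂Q ∂Q)
                 + (2 * klDivergence Q pr + ENNReal.ofReal L)
                     / ENNReal.ofReal (((0:ℕ) : ℝ) * c))} := by
      intro T _ Q hQ
      have h0 : ENNReal.ofReal (((0:ℕ) : ℝ) * c) = 0 := by simp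
      have hX : (2 * klDivergence Q pr + ENNReal.ofReal L) ≠ 0 := by
        refine ne_of_gt (lt_of_lt_of_le ?_ le_add_self)
        exact ENNReal.ofReal_pos.2 hLpos
      rw [h0, ENNReal.div_zero hX, add_top, ENNReal.mul_top
        (ne_of_gt (ENNReal.ofReal_pos.2 hA0))]
      exact le_top
    calc ENNReal.ofReal (1 - δ) ≤ 1 := ENNReal.ofReal_le_one.2 (by linarith)
      _ = (Measure.pi fun _ : Fin 0 => DT) Set.univ := (measure_univ).symm
      _ ≤ _ := measure_mono hsub
  -- main case
  have hmtR : (0 : ℝ) < mt := Nat.cast_pos.2 hmtpos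
  set PP : Measure (Ω × Ω) := pr.prod pr with hPP
  haveI : IsProbabilityMeasure PP := by rw [hPP]; infer_instance
  set Dpi : Measure (Fin mt → X) := Measure.pi fun _ : Fin mt => DT with hDpi
  haveI : IsProbabilityMeasure Dpi := by rw [hDpi]; infer_instance
  set f : (Fin mt → X) → (Ω × Ω) → ℝ :=
    fun T p => (mt : ℝ) * t * (∫ x, PacBayesAux.dis ev p x ∂DT)
      - c * ∑ i, PacBayesAux.dis ev p (T i) with hfdef
  set B : ℝ := (mt : ℝ) * t + c * mt with hBdef
  have hRmeas : Measurable fun p : Ω × Ω => ∫ x, PacBayesAux.dis ev p x ∂DT :=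
    (PacBayesAux.meas_dis hev).stronglyMeasurable.integral_prod_right'.measurable
  have hfmeas : Measurable fun q : (Fin mt → X) × (Ω × Ω) => f q.1 q.2 := by
    rw [hfdef]
    apply Measurable.sub
    · exact (hRmeas.comp measurable_snd).const_mul _
    · exact (Finset.measurable_sum Finset.univ (fun i _ =>
        (PacBayesAux.meas_dis hev).comp (measurable_snd.prodMk
          ((measurable_pi_apply i).comp measurable_fst)))).const_mul c
  have hsum0 : ∀ (T : Fin mt → X) (p : Ω × Ω), 0 ≤ ∑ i, PacBayesAux.dis ev p (T i) :=
    fun T p => Finset.sum_nonneg fun i _ => PacBayesAux.dis_nonneg ev p (T i)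
  have hsum1 : ∀ (T : Fin mt → X) (p : Ω × Ω), ∑ i, PacBayesAux.dis ev p (T i) ≤ mt := by
    intro T p
    calc ∑ i, PacBayesAux.dis ev p (T i) ≤ ∑ _i : Fin mt, (1 : ℝ) :=
          Finset.sum_le_sum fun i _ => PacBayesAux.dis_le_one ev p (T i)
      _ = mt := by simp
  have hfbd : ∀ (T : Fin mt → X) (p : Ω × Ω), |f T p| ≤ B := by
    intro T p
    have h1 := PacBayesAux.meanDis_nonneg (ev := ev) DT p
    have h2 := PacBayesAux.meanDis_le_one hev DT p
    have h3 := hsum0 T p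
    have h4 := hsum1 T p
    simp only [hfdef, hBdef]
    rw [abs_le]
    constructor
    · nlinarith [mul_nonneg (mul_nonneg hmtR.le ht0.le) h1,
        mul_le_mul_of_nonneg_left h4 hc.le]
    · nlinarith [mul_le_mul_of_nonneg_left h2 (mul_nonneg hmtR.le ht0.le),
        mul_nonneg hc.le h3]
  have hexpfbd : ∀ q : (Fin mt → X) × (Ω × Ω), |Real.exp (f q.1 q.2)| ≤ Real.exp B := by
    intro q
    rw [abs_of_pos (Real.exp_pos _)]
    exact Real.exp_le_exp.2 ((abs_le.1 (hfbd q.1 q.2)).2)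
  have hprodI : Integrable (fun q : (Fin mt → X) × (Ω × Ω) => Real.exp (f q.1 q.2))
      (Dpi.prod PP) :=
    PacBayesAux.integrable_of_bound _ (hfmeas.exp).aestronglyMeasurable _ hexpfbd
  set F : (Fin mt → X) → ℝ := fun T => ∫ p, Real.exp (f T p) ∂PP with hFdef
  have hFmeas : Measurable F :=
    (hfmeas.exp).stronglyMeasurable.integral_prod_right'.measurable
  have hFbd : ∀ T, |F T| ≤ Real.exp B := fun T =>
    PacBayesAux.abs_integral_le PP fun p => hexpfbd (T, p)
  have hF0 : ∀ T, 0 ≤ F T := fun T => integral_nonneg fun p => (Real.exp_pos _).le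
  have hFI : Integrable F Dpi :=
    PacBayesAux.integrable_of_bound _ hFmeas.aestronglyMeasurable _ hFbd
  have hfTI : ∀ T, Integrable (fun p => Real.exp (f T p)) PP := fun T =>
    PacBayesAux.integrable_of_bound _ ((hfmeas.comp
      (measurable_prodMk_left)).exp).aestronglyMeasurable _ (fun p => hexpfbd (T, p))
  have hEF : ∫ T, F T ∂Dpi ≤ 1 := by
    have hswap : ∫ T, ∫ p, Real.exp (f T p) ∂PP ∂Dpi
        = ∫ p, ∫ T, Real.exp (f T p) ∂Dpi ∂PP :=
      integral_integral_swap hprodI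
    have hpb : ∀ p, ∫ T, Real.exp (f T p) ∂Dpi ≤ 1 := by
      intro p
      have h := PacBayesAux.step_exp_bound hev DT mt hc p
      rw [← htdef] at h
      rw [hfdef, hDpi]
      exact h
    have hIp : Integrable (fun p => ∫ T, Real.exp (f T p) ∂Dpi) PP :=
      hprodI.integral_prod_right
    calc ∫ T, F T ∂Dpi = ∫ p, ∫ T, Real.exp (f T p) ∂Dpi ∂PP := by
          rw [hFdef]; exact hswap
      _ ≤ ∫ _p, (1 : ℝ) ∂PP := integral_mono hIp (integrable_const 1) hpb
      _ = 1 := by simp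
  have hmar := mul_meas_ge_le_integral_of_nonneg (μ := Dpi)
    (Filter.Eventually.of_forall hF0) hFI (1 / δ)
  have hbadmeas : MeasurableSet {T | 1 / δ ≤ F T} :=
    measurableSet_le measurable_const hFmeas
  have hbadμ : Dpi {T | 1 / δ ≤ F T} ≤ ENNReal.ofReal δ := by
    rw [ENNReal.le_ofReal_iff_toReal_le (measure_ne_top _ _) hδ0.le]
    have h2 : (1 / δ) * (Dpi {T | 1 / δ ≤ F T}).toReal ≤ 1 := le_trans hmar hEF
    have h4 : δ * (1 / δ * (Dpi {T | 1 / δ ≤ F T}).toReal) ≤ δ * 1 :=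
      mul_le_mul_of_nonneg_left h2 hδ0.le
    rw [← mul_assoc, mul_one_div, div_self hδ0.ne', one_mul, mul_one] at h4
    exact h4
  have hsub : {T : Fin mt → X | 1 / δ ≤ F T}ᶜ ⊆ {T : Fin mt → X |
      ∀ Q : Measure Ω, IsProbabilityMeasure Q →
        ENNReal.ofReal (∫ x, ∫ h, ∫ h',
            (if ev h x ≠ ev h' x then (1 : ℝ) else 0) ∂Q ∂Q ∂DT)
          ≤ ENNReal.ofReal (c / t)
              * (ENNReal.ofReal ((1 / (mt : ℝ)) * ∑ i : Fin mt, ∫ h, ∫ h',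
                    (if ev h (T i) ≠ ev h' (T i) then (1 : ℝ) else 0) ∂Q ∂Q)
                 + (2 * klDivergence Q pr + ENNReal.ofReal L)
                     / ENNReal.ofReal ((mt : ℝ) * c))} := by
    intro T hT
    rw [Set.mem_compl_iff, Set.mem_setOf_eq, not_le] at hT
    intro Q hQ
    haveI := hQ
    by_cases hkl : Q ≪ pr ∧ Integrable (llr Q pr) Q
    case neg =>
      have hKL : klDivergence Q pr = ⊤ := by rw [klDivergence, if_neg hkl]
      rw [hKL]
      have h1 : (2 * (⊤ : ℝ≥0∞) + ENNReal.ofReal L) / ENNReal.ofReal ((mt : ℝ) * c) = ⊤ := by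
        rw [ENNReal.mul_top (by norm_num : (2 : ℝ≥0∞) ≠ 0), top_add,
          ENNReal.top_div_of_ne_top ENNReal.ofReal_ne_top]
      rw [h1, add_top, ENNReal.mul_top (ne_of_gt (ENNReal.ofReal_pos.2 hA0))]
      exact le_top
    case pos =>
      obtain ⟨hQP, hllrQ⟩ := hkl
      set K : ℝ := ∫ h, llr Q pr h ∂Q with hKdef
      have hKL : klDivergence Q pr = ENNReal.ofReal K := by
        rw [klDivergence, if_pos ⟨hQP, hllrQ⟩]
      set QQ : Measure (Ω × Ω) := Q.prod Q with hQQ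
      haveI : IsProbabilityMeasure QQ := by rw [hQQ]; infer_instance
      have hfTmeas : Measurable (f T) := hfmeas.comp measurable_prodMk_left
      have hcm := PacBayesAux.change_of_measure2 (P := pr) hQP hllrQ hfTmeas (hfbd T)
      -- bound the log term
      have hFTpos : 0 < F T := by
        rw [hFdef]
        exact PacBayesAux.exp_integral_pos PP (hfTI T)
      have hfTIpr : Integrable (fun p => Real.exp (f T p)) PP := hfTI T
      have hiter : ∫ h, ∫ h', Real.exp (f T (h, h')) ∂pr ∂pr = F T := by
        rw [hFdef, hPP]
        exact (integral_prod _ (by rw [← hPP]; exact hfTIpr)).symm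
      have hlog : Real.log (∫ h, ∫ h', Real.exp (f T (h, h')) ∂pr ∂pr) ≤ L := by
        rw [hiter, hLdef]
        exact Real.log_le_log hFTpos hT.le
      -- integrabilities over QQ
      have hRIQQ : Integrable (fun p : Ω × Ω => ∫ x, PacBayesAux.dis ev p x ∂DT) QQ :=
        PacBayesAux.integrable_of_bound _ hRmeas.aestronglyMeasurable 1
          (fun p => PacBayesAux.abs_integral_le DT (PacBayesAux.abs_dis_le_one ev p))
      have hdisXI : ∀ x : X, Integrable (fun p : Ω × Ω => PacBayesAux.dis ev p x) QQ :=
        fun x => PacBayesAux.integrable_of_bound _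
          ((PacBayesAux.meas_dis hev).comp measurable_prodMk_right).aestronglyMeasurable 1
          (fun p => PacBayesAux.abs_dis_le_one ev p x)
      have hsumI : Integrable (fun p : Ω × Ω => ∑ i, PacBayesAux.dis ev p (T i)) QQ :=
        integrable_finset_sum _ fun i _ => hdisXI (T i)
      have hfQQI : Integrable (f T) QQ :=
        PacBayesAux.integrable_of_bound _ hfTmeas.aestronglyMeasurable _ (hfbd T)
      -- compute the double integral of `f T` over `Q × Q`
      have hLHS : ∫ h, ∫ h', f T (h, h') ∂Q ∂Q
          = (mt : ℝ) * t * (∫ p, (∫ x, PacBayesAux.dis ev p x ∂DT) ∂QQ)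
            - c * ∑ i, ∫ p, PacBayesAux.dis ev p (T i) ∂QQ := by
        rw [show (∫ h, ∫ h', f T (h, h') ∂Q ∂Q) = ∫ p, f T p ∂QQ from
          (by rw [hQQ]; exact (integral_prod _ (by rw [← hQQ]; exact hfQQI)).symm)]
        rw [hfdef]
        simp only
        rw [integral_sub (hRIQQ.const_mul _) (hsumI.const_mul c),
          MeasureTheory.integral_const_mul, MeasureTheory.integral_const_mul,
          integral_finset_sum _ fun i _ => hdisXI (T i)]
      -- Fubini for the true disagreement
      have hd : ∫ x, ∫ h, ∫ h', (if ev h x ≠ ev h' x then (1 : ℝ) else 0) ∂Q ∂Q ∂DT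
          = ∫ p, (∫ x, PacBayesAux.dis ev p x ∂DT) ∂QQ := by
        have hinner : ∀ x : X, ∫ h, ∫ h', (if ev h x ≠ ev h' x then (1 : ℝ) else 0) ∂Q ∂Q
            = ∫ p, PacBayesAux.dis ev p x ∂QQ := by
          intro x
          rw [hQQ]
          exact (integral_prod _ (by rw [← hQQ]; exact hdisXI x)).symm
        have hswapI : Integrable (Function.uncurry fun (x : X) (p : Ω × Ω) =>
            PacBayesAux.dis ev p x) (DT.prod QQ) :=
          PacBayesAux.integrable_of_bound _
            (((PacBayesAux.meas_dis hev).comp measurable_swap).aestronglyMeasurable)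
            1 (fun q => PacBayesAux.abs_dis_le_one ev q.2 q.1)
        calc ∫ x, ∫ h, ∫ h', (if ev h x ≠ ev h' x then (1 : ℝ) else 0) ∂Q ∂Q ∂DT
            = ∫ x, ∫ p, PacBayesAux.dis ev p x ∂QQ ∂DT :=
              integral_congr_ae (Filter.Eventually.of_forall hinner)
          _ = ∫ p, ∫ x, PacBayesAux.dis ev p x ∂DT ∂QQ := integral_integral_swap hswapI
      have hEid : ∀ i : Fin mt,
          ∫ h, ∫ h', (if ev h (T i) ≠ ev h' (T i) then (1 : ℝ) else 0) ∂Q ∂Q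
            = ∫ p, PacBayesAux.dis ev p (T i) ∂QQ := by
        intro i
        rw [hQQ]
        exact (integral_prod _ (by rw [← hQQ]; exact hdisXI (T i))).symm
      set D : ℝ := ∫ p, (∫ x, PacBayesAux.dis ev p x ∂DT) ∂QQ with hDdef
      set S : ℝ := ∑ i, ∫ p, PacBayesAux.dis ev p (T i) ∂QQ with hSdef
      have hreal : (mt : ℝ) * t * D - c * S ≤ 2 * K + L := by
        rw [hDdef, hSdef]
        calc (mt : ℝ) * t * (∫ p, (∫ x, PacBayesAux.dis ev p x ∂DT) ∂QQ)
            - c * ∑ i, ∫ p, PacBayesAux.dis ev p (T i) ∂QQ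
            = ∫ h, ∫ h', f T (h, h') ∂Q ∂Q := hLHS.symm
          _ ≤ 2 * K + Real.log (∫ h, ∫ h', Real.exp (f T (h, h')) ∂pr ∂pr) := hcm
          _ ≤ 2 * K + L := by linarith
      have hmain : D ≤ (c / t) * ((1 / (mt : ℝ)) * S + (2 * K + L) / ((mt : ℝ) * c)) := by
        have hmtT : (0 : ℝ) < (mt : ℝ) * t := by positivity
        rw [show (c / t) * ((1 / (mt : ℝ)) * S + (2 * K + L) / ((mt : ℝ) * c))
            = (c * S + (2 * K + L)) / ((mt : ℝ) * t) from by field_simp]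
        rw [le_div_iff₀ hmtT]
        nlinarith [hreal]
      -- transfer to `ℝ≥0∞`
      rw [hKL, hd]
      have hS' : (∑ i : Fin mt, ∫ h, ∫ h',
          (if ev h (T i) ≠ ev h' (T i) then (1 : ℝ) else 0) ∂Q ∂Q) = S := by
        rw [hSdef]
        exact Finset.sum_congr rfl fun i _ => hEid i
      rw [hS']
      calc ENNReal.ofReal D
          ≤ ENNReal.ofReal ((c / t) * ((1 / (mt : ℝ)) * S + (2 * K + L) / ((mt : ℝ) * c))) :=
            ENNReal.ofReal_le_ofReal hmain
        _ = ENNReal.ofReal (c / t)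
            * ENNReal.ofReal ((1 / (mt : ℝ)) * S + (2 * K + L) / ((mt : ℝ) * c)) :=
            ENNReal.ofReal_mul hA0.le
        _ ≤ ENNReal.ofReal (c / t)
            * (ENNReal.ofReal ((1 / (mt : ℝ)) * S)
              + ENNReal.ofReal ((2 * K + L) / ((mt : ℝ) * c))) :=
            mul_le_mul_right ENNReal.ofReal_add_le _
        _ ≤ ENNReal.ofReal (c / t)
            * (ENNReal.ofReal ((1 / (mt : ℝ)) * S)
              + (2 * ENNReal.ofReal K + ENNReal.ofReal L) / ENNReal.ofReal ((mt : ℝ) * c)) := by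
            refine mul_le_mul_right (add_le_add le_rfl ?_) _
            rw [ENNReal.ofReal_div_of_pos (by positivity : (0 : ℝ) < (mt : ℝ) * c)]
            refine ENNReal.div_le_div_right ?_ _
            calc ENNReal.ofReal (2 * K + L)
                ≤ ENNReal.ofReal (2 * K) + ENNReal.ofReal L := ENNReal.ofReal_add_le
              _ = 2 * ENNReal.ofReal K + ENNReal.ofReal L := by
                  rw [ENNReal.ofReal_mul (by norm_num : (0 : ℝ) ≤ 2)]
                  norm_num
  calc ENNReal.ofReal (1 - δ) ≤ 1 - ENNReal.ofReal δ := by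
        rw [ENNReal.ofReal_sub _ hδ0.le, ENNReal.ofReal_one]
    _ ≤ Dpi {T | 1 / δ ≤ F T}ᶜ := by
        rw [measure_compl hbadmeas (measure_ne_top _ _), measure_univ]
        exact tsub_le_tsub_left hbadμ 1
    _ ≤ _ := measure_mono hsub
end
end

section
/- Let P_S be a probability measure on X × Y, let H be a set of measurable classifiers with prior probability measure π on H, let b > 0 and δ ∈ (0,1]. Then with probability at least 1 − δ over the draw of an i.i.d. sample S = ((x_1,y_1),…,(x_{m_s},y_{m_s})) ∼ (P_S)^{m_s}, simultaneously for all posteriors Q on H: e_{P_S}(Q) ≤ (b/(1−e^{−b})) · [ ê_S(Q) + (2·KL(Q‖π) + ln(1/δ)) / (m_s·b) ], where ê_S(Q) = (1/m_s) Σ_{i=1}^{m_s} E_{h∼Q} E_{h'∼Q} 1[h(x_i) ≠ y_i]·1[h'(x_i) ≠ y_i] is the empirical expected joint error. -/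
/-!
STATEMENT 4: PAC-Bayesian generalization bound for the expected joint error
(second part of Corollary 5 of the paper).  `Y = {-1,1}` is encoded as `Bool`.
The KL divergence is `ℝ≥0∞`-valued (`∞` in degenerate cases), so the inequality
is stated in `ℝ≥0∞`.
-/

open MeasureTheory ProbabilityTheory Real
open scoped ENNReal Classical

noncomputable section

namespace PacBayesAux


lemma integrable_of_bounded {α : Type*} [MeasurableSpace α] (μ : Measure α)
    [IsFiniteMeasure μ] {f : α → ℝ} (hf : AEStronglyMeasurable f μ) (C : ℝ)
    (h : ∀ x, |f x| ≤ C) : Integrable f μ :=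
  Integrable.mono' (integrable_const C) hf (ae_of_all _ fun x => by
    simpa [Real.norm_eq_abs] using h x)


section DV
variable {Ω : Type*} [MeasurableSpace Ω]
/-- Master change-of-measure inequality in `ℝ≥0∞`. -/
lemma lintegral_exp_neg_llr_mul_le (Q pr : Measure Ω) [IsFiniteMeasure Q] [IsFiniteMeasure pr]
    (hQ : Q ≪ pr) (φ : Ω → ℝ≥0∞) (hφ : Measurable φ) :
    ∫⁻ h, ENNReal.ofReal (Real.exp (- llr Q pr h)) * φ h ∂Q ≤ ∫⁻ h, φ h ∂pr := by
  have hfm : Measurable fun h => ENNReal.ofReal (Real.exp (- llr Q pr h)) * φ h :=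
    ((measurable_llr Q pr).neg.exp.ennreal_ofReal).mul hφ
  rw [show (∫⁻ h, ENNReal.ofReal (Real.exp (- llr Q pr h)) * φ h ∂Q)
      = ∫⁻ h, (Q.rnDeriv pr * fun h => ENNReal.ofReal (Real.exp (- llr Q pr h)) * φ h) h ∂pr by
    rw [← lintegral_withDensity_eq_lintegral_mul pr (Measure.measurable_rnDeriv Q pr) hfm,
      Measure.withDensity_rnDeriv_eq Q pr hQ]]
  refine lintegral_mono_ae ?_
  filter_upwards [Measure.rnDeriv_lt_top Q pr] with h hlt
  simp only [Pi.mul_apply]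
  rcases eq_or_ne (Q.rnDeriv pr h) 0 with h0 | h0
  · simp [h0]
  · have htR : 0 < (Q.rnDeriv pr h).toReal := ENNReal.toReal_pos h0 hlt.ne
    have : Real.exp (- llr Q pr h) = ((Q.rnDeriv pr h).toReal)⁻¹ := by
      rw [llr, Real.exp_neg, Real.exp_log htR]
    rw [this]
    have h1 : Q.rnDeriv pr h * ENNReal.ofReal ((Q.rnDeriv pr h).toReal)⁻¹ = 1 := by
      rw [ENNReal.ofReal_inv_of_pos htR, ENNReal.ofReal_toReal hlt.ne,
        ENNReal.mul_inv_cancel h0 hlt.ne]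
    refine le_of_eq ?_
    calc Q.rnDeriv pr h * (ENNReal.ofReal ((Q.rnDeriv pr h).toReal)⁻¹ * φ h)
        = (Q.rnDeriv pr h * ENNReal.ofReal ((Q.rnDeriv pr h).toReal)⁻¹) * φ h := by ring
      _ = φ h := by rw [h1, one_mul]


/-- Donsker–Varadhan style change of measure bound. -/
lemma dv_core (Q pr : Measure Ω) [IsProbabilityMeasure Q] [IsProbabilityMeasure pr]
    (hQ : Q ≪ pr) (hllr : Integrable (llr Q pr) Q)
    (g : Ω × Ω → ℝ) (hg : Measurable g) (M : ℝ) (hgM : ∀ p, |g p| ≤ M) :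
    ∫ p, g p ∂(Q.prod Q) ≤ 2 * (∫ h, llr Q pr h ∂Q)
      + Real.log (∫ p, Real.exp (g p) ∂(pr.prod pr)) := by
  set u : Ω → ℝ := fun h => Real.exp (- llr Q pr h) with hu
  have hum : Measurable u := (measurable_llr Q pr).neg.exp
  have hu0 : ∀ h, 0 ≤ u h := fun h => (Real.exp_pos _).le
  set c₀ : ℝ := ∫ p, Real.exp (g p) ∂(pr.prod pr) with hc₀
  have hexpgm : Measurable fun p : Ω × Ω => Real.exp (g p) := hg.exp
  have hexpg_int : Integrable (fun p : Ω × Ω => Real.exp (g p)) (pr.prod pr) :=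
    integrable_of_bounded _ hexpgm.aestronglyMeasurable (Real.exp M) fun p => by
      rw [abs_of_pos (Real.exp_pos _)]
      exact Real.exp_le_exp.2 ((abs_le.1 (hgM p)).2)
  have hc₀pos : 0 < c₀ := by
    have h1 : Real.exp (-M) ≤ c₀ := by
      have := integral_mono (integrable_const (Real.exp (-M))) hexpg_int
        (fun p => Real.exp_le_exp.2 (neg_le_of_abs_le (hgM p)))
      simpa using this
    exact lt_of_lt_of_le (Real.exp_pos _) h1
  -- the key lintegral bound
  set ξ : Ω × Ω → ℝ := fun p => u p.1 * (u p.2 * Real.exp (g p)) with hξ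
  have hξm : Measurable ξ := (hum.comp measurable_fst).mul
    ((hum.comp measurable_snd).mul hexpgm)
  have hξ0 : ∀ p, 0 ≤ ξ p := fun p =>
    mul_nonneg (hu0 _) (mul_nonneg (hu0 _) (Real.exp_pos _).le)
  have hB : ∫⁻ p, ENNReal.ofReal (ξ p) ∂(Q.prod Q) ≤ ENNReal.ofReal c₀ := by
    have hsplit : ∀ p : Ω × Ω, ENNReal.ofReal (ξ p)
        = ENNReal.ofReal (u p.1) * (ENNReal.ofReal (u p.2)
            * ENNReal.ofReal (Real.exp (g p))) := fun p => by
      rw [ENNReal.ofReal_mul (hu0 _), ENNReal.ofReal_mul (hu0 _)]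
    have hWm : Measurable fun h : Ω => ∫⁻ h', ENNReal.ofReal (Real.exp (g (h, h'))) ∂pr :=
      Measurable.lintegral_prod_right' hexpgm.ennreal_ofReal
    calc ∫⁻ p, ENNReal.ofReal (ξ p) ∂(Q.prod Q)
        = ∫⁻ h, ∫⁻ h', ENNReal.ofReal (ξ (h, h')) ∂Q ∂Q := by
          exact lintegral_prod _ (hξm.ennreal_ofReal.aemeasurable)
      _ ≤ ∫⁻ h, ENNReal.ofReal (u h) *
            (∫⁻ h', ENNReal.ofReal (Real.exp (g (h, h'))) ∂pr) ∂Q := by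
          refine lintegral_mono fun h => ?_
          have hφm : Measurable fun h' : Ω =>
              ENNReal.ofReal (u h) * ENNReal.ofReal (Real.exp (g (h, h'))) :=
            measurable_const.mul ((hg.comp measurable_prodMk_left).exp.ennreal_ofReal)
          calc ∫⁻ h', ENNReal.ofReal (ξ (h, h')) ∂Q
              = ∫⁻ h', ENNReal.ofReal (Real.exp (- llr Q pr h')) *
                  (ENNReal.ofReal (u h) * ENNReal.ofReal (Real.exp (g (h, h')))) ∂Q := by
                refine lintegral_congr fun h' => ?_
                rw [hsplit (h, h')]
                ring
            _ ≤ ∫⁻ h', ENNReal.ofReal (u h) * ENNReal.ofReal (Real.exp (g (h, h'))) ∂pr :=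
                lintegral_exp_neg_llr_mul_le Q pr hQ _ hφm
            _ = ENNReal.ofReal (u h) * ∫⁻ h', ENNReal.ofReal (Real.exp (g (h, h'))) ∂pr :=
                lintegral_const_mul _ ((hg.comp measurable_prodMk_left).exp.ennreal_ofReal)
      _ ≤ ∫⁻ h, (∫⁻ h', ENNReal.ofReal (Real.exp (g (h, h'))) ∂pr) ∂pr :=
          lintegral_exp_neg_llr_mul_le Q pr hQ _ hWm
      _ = ∫⁻ p, ENNReal.ofReal (Real.exp (g p)) ∂(pr.prod pr) :=
          (lintegral_prod _ (hexpgm.ennreal_ofReal.aemeasurable)).symm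
      _ = ENNReal.ofReal c₀ :=
          (ofReal_integral_eq_lintegral_ofReal hexpg_int
            (ae_of_all _ fun p => (Real.exp_pos _).le)).symm
  have hξint : Integrable ξ (Q.prod Q) := by
    refine ⟨hξm.aestronglyMeasurable, ?_⟩
    rw [hasFiniteIntegral_iff_ofReal (ae_of_all _ hξ0)]
    exact lt_of_le_of_lt hB ENNReal.ofReal_lt_top
  have hξle : ∫ p, ξ p ∂(Q.prod Q) ≤ c₀ := by
    rw [integral_eq_lintegral_of_nonneg_ae (ae_of_all _ hξ0) hξm.aestronglyMeasurable]
    calc (∫⁻ p, ENNReal.ofReal (ξ p) ∂(Q.prod Q)).toReal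
        ≤ (ENNReal.ofReal c₀).toReal := ENNReal.toReal_mono ENNReal.ofReal_ne_top hB
      _ = c₀ := ENNReal.toReal_ofReal hc₀pos.le
  have ht1 : Integrable (fun p : Ω × Ω => llr Q pr p.1) (Q.prod Q) := by
    simpa using Integrable.mul_prod hllr (integrable_const (1 : ℝ))
  have ht2 : Integrable (fun p : Ω × Ω => llr Q pr p.2) (Q.prod Q) := by
    simpa using Integrable.mul_prod (integrable_const (1 : ℝ)) hllr
  have hint1 : ∫ p, llr Q pr p.1 ∂(Q.prod Q) = ∫ h, llr Q pr h ∂Q := by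
    simpa using integral_prod_mul (μ := Q) (ν := Q) (llr Q pr) (fun _ => (1 : ℝ))
  have hint2 : ∫ p, llr Q pr p.2 ∂(Q.prod Q) = ∫ h, llr Q pr h ∂Q := by
    simpa using integral_prod_mul (μ := Q) (ν := Q) (fun _ => (1 : ℝ)) (llr Q pr)
  have hgint : Integrable g (Q.prod Q) := integrable_of_bounded _ hg.aestronglyMeasurable M hgM
  have hpt : ∀ p : Ω × Ω, g p - (llr Q pr p.1 + llr Q pr p.2) - Real.log c₀
      ≤ ξ p / c₀ - 1 := by
    intro p
    have h1 := Real.add_one_le_exp (g p - (llr Q pr p.1 + llr Q pr p.2) - Real.log c₀)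
    have h2 : Real.exp (g p - (llr Q pr p.1 + llr Q pr p.2) - Real.log c₀) = ξ p / c₀ := by
      rw [Real.exp_sub, Real.exp_sub, Real.exp_add, Real.exp_log hc₀pos, hξ]
      simp only [hu, Real.exp_neg]
      ring
    linarith [h1, h2.le, h2.ge]
  have hT : Integrable (fun p : Ω × Ω => llr Q pr p.1 + llr Q pr p.2) (Q.prod Q) :=
    ht1.add ht2
  have hGT : Integrable (fun p : Ω × Ω => g p - (llr Q pr p.1 + llr Q pr p.2)) (Q.prod Q) :=
    hgint.sub hT
  have hXd : Integrable (fun p : Ω × Ω => ξ p / c₀) (Q.prod Q) := hξint.div_const c₀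
  have key : ∫ p, (g p - (llr Q pr p.1 + llr Q pr p.2) - Real.log c₀) ∂(Q.prod Q)
      ≤ ∫ p, (ξ p / c₀ - 1) ∂(Q.prod Q) :=
    integral_mono (hGT.sub (integrable_const _)) (hXd.sub (integrable_const 1)) hpt
  have I1 : ∫ p, (g p - (llr Q pr p.1 + llr Q pr p.2) - Real.log c₀) ∂(Q.prod Q)
      = ∫ p, g p ∂(Q.prod Q) - 2 * (∫ h, llr Q pr h ∂Q) - Real.log c₀ := by
    rw [integral_sub hGT (integrable_const _), integral_sub hgint hT,
      integral_add ht1 ht2, hint1, hint2, integral_const]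
    simp only [measure_univ, ENNReal.toReal_one, probReal_univ, smul_eq_mul, one_mul]
    ring
  have I2 : ∫ p, (ξ p / c₀ - 1) ∂(Q.prod Q)
      = (∫ p, ξ p ∂(Q.prod Q)) / c₀ - 1 := by
    rw [integral_sub hXd (integrable_const _), integral_div, integral_const]
    simp
  rw [I1, I2] at key
  have hdiv : (∫ p, ξ p ∂(Q.prod Q)) / c₀ ≤ 1 := (div_le_one hc₀pos).2 hξle
  linarith


end DV
variable {X : Type*} [MeasurableSpace X] {Ω : Type*} [MeasurableSpace Ω]

/-- joint error loss -/
def jloss (ev : Ω → X → Bool) (p : Ω × Ω) (z : X × Bool) : ℝ :=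
  if ev p.1 z.1 ≠ z.2 ∧ ev p.2 z.1 ≠ z.2 then 1 else 0

lemma jloss_nonneg (ev : Ω → X → Bool) (p : Ω × Ω) (z : X × Bool) : 0 ≤ jloss ev p z := by
  unfold jloss; split <;> norm_num

lemma jloss_le_one (ev : Ω → X → Bool) (p : Ω × Ω) (z : X × Bool) : jloss ev p z ≤ 1 := by
  unfold jloss; split <;> norm_num

lemma measurable_jloss (ev : Ω → X → Bool) (hev : Measurable (Function.uncurry ev)) :
    Measurable (fun q : (Ω × Ω) × (X × Bool) => jloss ev q.1 q.2) := by
  have e1 : Measurable fun q : (Ω × Ω) × (X × Bool) => ev q.1.1 q.2.1 :=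
    hev.comp ((measurable_fst.comp measurable_fst).prodMk (measurable_fst.comp measurable_snd))
  have e2 : Measurable fun q : (Ω × Ω) × (X × Bool) => ev q.1.2 q.2.1 :=
    hev.comp ((measurable_snd.comp measurable_fst).prodMk (measurable_fst.comp measurable_snd))
  have e3 : Measurable fun q : (Ω × Ω) × (X × Bool) => q.2.2 :=
    measurable_snd.comp measurable_snd
  have hne : MeasurableSet {p : Bool × Bool | p.1 ≠ p.2} :=
    (Set.to_countable _).measurableSet
  have hA : MeasurableSet {q : (Ω × Ω) × (X × Bool) |
      ev q.1.1 q.2.1 ≠ q.2.2 ∧ ev q.1.2 q.2.1 ≠ q.2.2} := by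
    have h1 : MeasurableSet {q : (Ω × Ω) × (X × Bool) | ev q.1.1 q.2.1 ≠ q.2.2} :=
      (e1.prodMk e3) hne
    have h2 : MeasurableSet {q : (Ω × Ω) × (X × Bool) | ev q.1.2 q.2.1 ≠ q.2.2} :=
      (e2.prodMk e3) hne
    exact h1.inter h2
  unfold jloss
  exact Measurable.ite hA measurable_const measurable_const

variable (ev : Ω → X → Bool) (PS : Measure (X × Bool))

/-- expected joint error of the pair `p` -/
def Rj : Ω × Ω → ℝ := fun p => ∫ z, jloss ev p z ∂PS

lemma measurable_Rj (hev : Measurable (Function.uncurry ev)) [SFinite PS] :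
    Measurable (Rj ev PS) :=
  (StronglyMeasurable.integral_prod_right'
    (measurable_jloss ev hev).stronglyMeasurable).measurable

variable [IsProbabilityMeasure PS]

lemma integrable_jloss (hev : Measurable (Function.uncurry ev)) (p : Ω × Ω) :
    Integrable (fun z => jloss ev p z) PS :=
  integrable_of_bounded _ ((measurable_jloss ev hev).comp
    (measurable_const.prodMk measurable_id)).aestronglyMeasurable 1
    (fun z => abs_le.2 ⟨by linarith [jloss_nonneg ev p z], jloss_le_one ev p z⟩)

lemma Rj_nonneg (p : Ω × Ω) : 0 ≤ Rj ev PS p :=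
  integral_nonneg (fun z => jloss_nonneg ev p z)

lemma Rj_le_one (hev : Measurable (Function.uncurry ev)) (p : Ω × Ω) : Rj ev PS p ≤ 1 := by
  have := integral_mono (integrable_jloss ev PS hev p) (integrable_const 1)
    (fun z => jloss_le_one ev p z)
  simpa [Rj] using this

/-- one-sample exponential moment -/
lemma integral_exp_neg_jloss (hev : Measurable (Function.uncurry ev)) (b : ℝ) (p : Ω × Ω) :
    ∫ z, Real.exp (- b * jloss ev p z) ∂PS = 1 - (1 - Real.exp (-b)) * Rj ev PS p := by
  have hpt : ∀ z, Real.exp (- b * jloss ev p z)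
      = 1 - (1 - Real.exp (-b)) * jloss ev p z := by
    intro z
    unfold jloss
    split
    · simp
    · simp
  rw [show (fun z => Real.exp (- b * jloss ev p z))
      = fun z => 1 - (1 - Real.exp (-b)) * jloss ev p z from funext hpt]
  rw [integral_sub (integrable_const 1) ((integrable_jloss ev PS hev p).const_mul _),
    integral_const_mul, integral_const]
  simp [Rj]

/-- Fubini for probability product measures -/
lemma integral_pi_prod {α : Type*} [MeasurableSpace α] (μ : Measure α) [IsProbabilityMeasure μ]
    (n : ℕ) (f : Fin n → α → ℝ) :
    ∫ S, ∏ i, f i (S i) ∂(Measure.pi fun _ : Fin n => μ) = ∏ i, ∫ x, f i x ∂μ := by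
  letI : MeasureSpace α := ⟨μ⟩
  exact MeasureTheory.integral_fintype_prod_eq_prod (μ := fun _ => μ) f


variable {n : ℕ}

/-- empirical count of joint errors -/
def XS (ev : Ω → X → Bool) (S : Fin n → X × Bool) (p : Ω × Ω) : ℝ :=
  ∑ i, jloss ev p (S i)

/-- the supermartingale-type function -/
def Fn (ev : Ω → X → Bool) (PS : Measure (X × Bool)) (b : ℝ) (n : ℕ)
    (S : Fin n → X × Bool) (p : Ω × Ω) : ℝ :=
  - b * XS ev S p - n * Real.log (1 - (1 - Real.exp (-b)) * Rj ev PS p)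

lemma XS_nonneg (S : Fin n → X × Bool) (p : Ω × Ω) : 0 ≤ XS ev S p :=
  Finset.sum_nonneg fun i _ => jloss_nonneg ev p (S i)

lemma XS_le (S : Fin n → X × Bool) (p : Ω × Ω) : XS ev S p ≤ n := by
  calc XS ev S p ≤ ∑ _i : Fin n, (1 : ℝ) :=
        Finset.sum_le_sum fun i _ => jloss_le_one ev p (S i)
    _ = n := by simp

lemma measurable_XS_pair (hev : Measurable (Function.uncurry ev)) :
    Measurable fun q : (Fin n → X × Bool) × (Ω × Ω) => XS ev q.1 q.2 := by
  unfold XS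
  refine Finset.measurable_sum _ fun i _ => ?_
  exact (measurable_jloss ev hev).comp
    (measurable_snd.prodMk ((measurable_pi_apply i).comp measurable_fst))

lemma one_sub_c_mul_Rj_pos (hev : Measurable (Function.uncurry ev)) (b : ℝ) (hb : 0 < b)
    (p : Ω × Ω) : 0 < 1 - (1 - Real.exp (-b)) * Rj ev PS p := by
  have h1 : (1 - Real.exp (-b)) * Rj ev PS p ≤ (1 - Real.exp (-b)) * 1 := by
    have hc0 : 0 ≤ 1 - Real.exp (-b) := by
      have : Real.exp (-b) ≤ 1 := Real.exp_le_one_iff.2 (by linarith)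
      linarith
    exact mul_le_mul_of_nonneg_left (Rj_le_one ev PS hev p) hc0
  have := Real.exp_pos (-b)
  nlinarith

lemma log_term_bounds (hev : Measurable (Function.uncurry ev)) (b : ℝ) (hb : 0 < b)
    (p : Ω × Ω) : -b ≤ Real.log (1 - (1 - Real.exp (-b)) * Rj ev PS p)
      ∧ Real.log (1 - (1 - Real.exp (-b)) * Rj ev PS p) ≤ 0 := by
  have hpos := one_sub_c_mul_Rj_pos ev PS hev b hb p
  have hcRnn : 0 ≤ (1 - Real.exp (-b)) * Rj ev PS p := by
    have hc0 : 0 ≤ 1 - Real.exp (-b) := by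
      have : Real.exp (-b) ≤ 1 := Real.exp_le_one_iff.2 (by linarith)
      linarith
    exact mul_nonneg hc0 (Rj_nonneg ev PS p)
  constructor
  · have hle : Real.exp (-b) ≤ 1 - (1 - Real.exp (-b)) * Rj ev PS p := by
      have h1 : (1 - Real.exp (-b)) * Rj ev PS p ≤ (1 - Real.exp (-b)) * 1 := by
        have hc0 : 0 ≤ 1 - Real.exp (-b) := by
          have : Real.exp (-b) ≤ 1 := Real.exp_le_one_iff.2 (by linarith)
          linarith
        exact mul_le_mul_of_nonneg_left (Rj_le_one ev PS hev p) hc0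
      linarith
    calc -b = Real.log (Real.exp (-b)) := (Real.log_exp _).symm
      _ ≤ _ := Real.log_le_log (Real.exp_pos _) hle
  · exact Real.log_nonpos (by linarith) (by linarith)

lemma abs_Fn_le (hev : Measurable (Function.uncurry ev)) (b : ℝ) (hb : 0 < b)
    (S : Fin n → X × Bool) (p : Ω × Ω) : |Fn ev PS b n S p| ≤ b * n := by
  obtain ⟨hl, hr⟩ := log_term_bounds ev PS hev b hb p
  have hX0 := XS_nonneg ev S p
  have hXn := XS_le ev S p
  have hn0 : (0 : ℝ) ≤ n := Nat.cast_nonneg n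
  rw [abs_le, Fn]
  constructor
  · nlinarith
  · nlinarith

lemma measurable_Fn_pair (hev : Measurable (Function.uncurry ev)) [SFinite PS] (b : ℝ) :
    Measurable fun q : (Fin n → X × Bool) × (Ω × Ω) => Fn ev PS b n q.1 q.2 := by
  unfold Fn
  refine Measurable.sub ?_ ?_
  · exact measurable_const.mul (measurable_XS_pair ev hev)
  · exact measurable_const.mul (Real.measurable_log.comp
      (measurable_const.sub
        (measurable_const.mul ((measurable_Rj ev PS hev).comp measurable_snd))))

/-- exponential moment identity -/
lemma integral_exp_Fn (hev : Measurable (Function.uncurry ev)) (b : ℝ) (hb : 0 < b)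
    (p : Ω × Ω) :
    ∫ S, Real.exp (Fn ev PS b n S p) ∂(Measure.pi fun _ : Fin n => PS) = 1 := by
  set y : ℝ := 1 - (1 - Real.exp (-b)) * Rj ev PS p with hy
  have hypos : 0 < y := one_sub_c_mul_Rj_pos ev PS hev b hb p
  have hexp : ∀ S : Fin n → X × Bool, Real.exp (Fn ev PS b n S p)
      = Real.exp (- (n * Real.log y)) * ∏ i, Real.exp (- b * jloss ev p (S i)) := by
    intro S
    rw [Fn, XS, ← hy]
    rw [show - b * (∑ i, jloss ev p (S i)) - ↑n * Real.log y
        = (- (↑n * Real.log y)) + ∑ i, - b * jloss ev p (S i) by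
      rw [← Finset.mul_sum]; ring]
    rw [Real.exp_add, Real.exp_sum]
  calc ∫ S, Real.exp (Fn ev PS b n S p) ∂(Measure.pi fun _ : Fin n => PS)
      = ∫ S, Real.exp (- (n * Real.log y)) *
          ∏ i, Real.exp (- b * jloss ev p (S i)) ∂(Measure.pi fun _ : Fin n => PS) := by
        exact integral_congr_ae (ae_of_all _ hexp)
    _ = Real.exp (- (n * Real.log y)) *
          ∫ S, ∏ i, Real.exp (- b * jloss ev p (S i)) ∂(Measure.pi fun _ : Fin n => PS) :=
        integral_const_mul _ _
    _ = Real.exp (- (n * Real.log y)) * ∏ _i : Fin n, (∫ z, Real.exp (- b * jloss ev p z) ∂PS) := by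
        rw [integral_pi_prod PS n (fun _ z => Real.exp (- b * jloss ev p z))]
    _ = Real.exp (- (n * Real.log y)) * y ^ n := by
        rw [Finset.prod_const, integral_exp_neg_jloss ev PS hev b p, ← hy]
        simp
    _ = 1 := by
        rw [← Real.exp_log hypos, ← Real.exp_nat_mul, ← Real.exp_add]
        simp [Real.exp_log hypos]

/-- Markov event bound -/
lemma markov_event {α : Type*} [MeasurableSpace α] (μ : Measure α) [IsProbabilityMeasure μ]
    (G : α → ℝ) (hGm : Measurable G) (hG0 : ∀ x, 0 ≤ G x) (hGint : Integrable G μ)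
    (hGi : ∫ x, G x ∂μ ≤ 1) (δ : ℝ) (hδ : 0 < δ) :
    ENNReal.ofReal (1 - δ) ≤ μ {x | G x ≤ 1 / δ} := by
  have hset : μ {x | 1 / δ ≤ G x} ≤ ENNReal.ofReal δ := by
    have hM := mul_meas_ge_le_integral_of_nonneg (ae_of_all _ hG0) hGint (1 / δ)
    have hM2 : (1 / δ) * (μ {x | 1 / δ ≤ G x}).toReal ≤ 1 := le_trans hM hGi
    have hT : (μ {x | 1 / δ ≤ G x}).toReal ≤ δ := by
      rw [div_mul_eq_mul_div, div_le_one hδ, one_mul] at hM2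
      exact hM2
    exact (ENNReal.le_ofReal_iff_toReal_le (measure_ne_top μ _) hδ.le).2 hT
  have hcompl : μ ({x | G x ≤ 1 / δ}ᶜ) ≤ ENNReal.ofReal δ := by
    refine le_trans (measure_mono ?_) hset
    intro x hx
    simp only [Set.mem_compl_iff, Set.mem_setOf_eq, not_le] at hx
    exact hx.le
  have hms : MeasurableSet {x | G x ≤ 1 / δ} := measurableSet_le hGm measurable_const
  have hc : μ ({x | G x ≤ 1 / δ}ᶜ) = 1 - μ {x | G x ≤ 1 / δ} := prob_compl_eq_one_sub hms
  calc ENNReal.ofReal (1 - δ) = 1 - ENNReal.ofReal δ := by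
        rw [ENNReal.ofReal_sub _ hδ.le, ENNReal.ofReal_one]
    _ ≤ 1 - μ ({x | G x ≤ 1 / δ}ᶜ) := tsub_le_tsub_left hcompl 1
    _ = 1 - (1 - μ {x | G x ≤ 1 / δ}) := by rw [hc]
    _ = μ {x | G x ≤ 1 / δ} :=
        ENNReal.sub_sub_cancel ENNReal.one_ne_top prob_le_one


end PacBayesAux

set_option maxHeartbeats 2000000 in
theorem pac_bayes_joint_error
    {X : Type*} [MeasurableSpace X] {Ω : Type*} [MeasurableSpace Ω]
    (ev : Ω → X → Bool) (hev : Measurable (Function.uncurry ev))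
    (PS : Measure (X × Bool)) [IsProbabilityMeasure PS]
    (pr : Measure Ω) [IsProbabilityMeasure pr]
    (ms : ℕ) (b : ℝ) (hb : 0 < b) (δ : ℝ) (hδ0 : 0 < δ) (hδ1 : δ ≤ 1) :
    ENNReal.ofReal (1 - δ) ≤
      (Measure.pi fun _ : Fin ms => PS)
        {S | ∀ Q : Measure Ω, IsProbabilityMeasure Q →
          -- e_{P_S}(Q) ≤ b/(1-e^{-b}) [ ê_S(Q) + (2 KL(Q‖π) + ln(1/δ)) / (m_s b) ]
          ENNReal.ofReal (∫ z, ∫ h, ∫ h',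
              (if ev h z.1 ≠ z.2 ∧ ev h' z.1 ≠ z.2 then (1 : ℝ) else 0) ∂Q ∂Q ∂PS)
            ≤ ENNReal.ofReal (b / (1 - Real.exp (-b)))
                * (ENNReal.ofReal ((1 / (ms : ℝ)) * ∑ i : Fin ms, ∫ h, ∫ h',
                      (if ev h (S i).1 ≠ (S i).2 ∧ ev h' (S i).1 ≠ (S i).2 then (1 : ℝ) else 0)
                        ∂Q ∂Q)
                   + (2 * klDivergence Q pr + ENNReal.ofReal (Real.log (1 / δ)))
                       / ENNReal.ofReal ((ms : ℝ) * b))} := by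
  classical
  open PacBayesAux in
  set c := 1 - Real.exp (-b) with hcdef
  have hc : 0 < c := by
    have h1 : Real.exp (-b) < 1 := by rw [Real.exp_lt_one_iff]; linarith
    rw [hcdef]; linarith
  have hcoeffne : ENNReal.ofReal (b / c) ≠ 0 := (ENNReal.ofReal_pos.2 (div_pos hb hc)).ne'
  rcases Nat.eq_zero_or_pos ms with hms | hms
  · -- degenerate case ms = 0
    rcases eq_or_lt_of_le hδ1 with hδe | hδlt
    · rw [← hδe]; simp
    · refine le_trans ?_ (measure_mono
        (fun (S : Fin ms → X × Bool) (_ : S ∈ (Set.univ : Set (Fin ms → X × Bool))) => ?_))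
      · calc ENNReal.ofReal (1 - δ) ≤ 1 := ENNReal.ofReal_le_one.2 (by linarith)
          _ = (Measure.pi fun _ : Fin ms => PS) Set.univ := measure_univ.symm
      · simp only [Set.mem_setOf_eq]
        intro Q hQ
        have hb0 : ENNReal.ofReal ((ms : ℝ) * b) = 0 := by
          rw [hms]; simp
        have hLpos : 0 < Real.log (1 / δ) := Real.log_pos (one_lt_one_div hδ0 hδlt)
        have hnum : 2 * klDivergence Q pr + ENNReal.ofReal (Real.log (1 / δ)) ≠ 0 := by
          refine ne_of_gt (lt_of_lt_of_le (ENNReal.ofReal_pos.2 hLpos) le_add_self)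
        rw [hb0, ENNReal.div_zero hnum, add_top, ENNReal.mul_top hcoeffne]
        exact le_top
  · -- main case ms ≥ 1
    have hFm : Measurable fun q : (Fin ms → X × Bool) × (Ω × Ω) => Fn ev PS b ms q.1 q.2 :=
      measurable_Fn_pair ev PS hev b
    have hFSm : ∀ S : Fin ms → X × Bool, Measurable fun p => Fn ev PS b ms S p := fun S =>
      hFm.comp (measurable_const.prodMk measurable_id)
    have habsexp : ∀ (S : Fin ms → X × Bool) (p : Ω × Ω),
        |Real.exp (Fn ev PS b ms S p)| ≤ Real.exp (b * ms) := by
      intro S p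
      rw [abs_of_pos (Real.exp_pos _)]
      exact Real.exp_le_exp.2 (abs_le.1 (abs_Fn_le ev PS hev b hb S p)).2
    have hexpint : ∀ S : Fin ms → X × Bool,
        Integrable (fun p => Real.exp (Fn ev PS b ms S p)) (pr.prod pr) := fun S =>
      integrable_of_bounded _ ((hFSm S).exp).aestronglyMeasurable _ (habsexp S)
    have hGsm : StronglyMeasurable
        (fun S : Fin ms → X × Bool => ∫ p, Real.exp (Fn ev PS b ms S p) ∂(pr.prod pr)) :=
      StronglyMeasurable.integral_prod_right' (hFm.exp).stronglyMeasurable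
    have hG0 : ∀ S : Fin ms → X × Bool,
        0 ≤ ∫ p, Real.exp (Fn ev PS b ms S p) ∂(pr.prod pr) := fun S =>
      integral_nonneg fun p => (Real.exp_pos _).le
    have hGbd : ∀ S : Fin ms → X × Bool,
        |∫ p, Real.exp (Fn ev PS b ms S p) ∂(pr.prod pr)| ≤ Real.exp (b * ms) := by
      intro S
      have := norm_integral_le_of_norm_le_const (μ := pr.prod pr)
        (f := fun p => Real.exp (Fn ev PS b ms S p)) (C := Real.exp (b * ms))
        (ae_of_all _ fun p => by simpa [Real.norm_eq_abs] using habsexp S p)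
      simpa [Real.norm_eq_abs, measure_univ] using this
    have hGint : Integrable
        (fun S : Fin ms → X × Bool => ∫ p, Real.exp (Fn ev PS b ms S p) ∂(pr.prod pr))
        (Measure.pi fun _ : Fin ms => PS) :=
      integrable_of_bounded _ hGsm.measurable.aestronglyMeasurable _ hGbd
    have hGone : ∫ S, (∫ p, Real.exp (Fn ev PS b ms S p) ∂(pr.prod pr))
        ∂(Measure.pi fun _ : Fin ms => PS) = 1 := by
      have hunc : Integrable (Function.uncurry fun S p => Real.exp (Fn ev PS b ms S p))
          ((Measure.pi fun _ : Fin ms => PS).prod (pr.prod pr)) :=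
        integrable_of_bounded _ (hFm.exp).aestronglyMeasurable _ (fun q => habsexp q.1 q.2)
      calc ∫ S, (∫ p, Real.exp (Fn ev PS b ms S p) ∂(pr.prod pr))
            ∂(Measure.pi fun _ : Fin ms => PS)
          = ∫ p, (∫ S, Real.exp (Fn ev PS b ms S p)
              ∂(Measure.pi fun _ : Fin ms => PS)) ∂(pr.prod pr) :=
            integral_integral_swap hunc
        _ = ∫ _p, (1 : ℝ) ∂(pr.prod pr) :=
            integral_congr_ae (ae_of_all _ fun p => integral_exp_Fn ev PS hev b hb p)
        _ = 1 := by simp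
    refine le_trans (markov_event (Measure.pi fun _ : Fin ms => PS) _
      hGsm.measurable hG0 hGint (le_of_eq hGone) δ hδ0) (measure_mono (fun S hS => ?_))
    simp only [Set.mem_setOf_eq] at hS ⊢
    intro Q hQ
    -- Fubini rewrites of the statement's integrals
    have hQjm : ∀ z : X × Bool, Measurable fun p : Ω × Ω => jloss ev p z := fun z =>
      (measurable_jloss ev hev).comp (measurable_id.prodMk measurable_const)
    have hQjint : ∀ z : X × Bool, Integrable (fun p : Ω × Ω => jloss ev p z) (Q.prod Q) :=
      fun z => integrable_of_bounded _ (hQjm z).aestronglyMeasurable 1 fun p =>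
        abs_le.2 ⟨by linarith [jloss_nonneg ev p z], jloss_le_one ev p z⟩
    have hdouble : ∀ z : X × Bool,
        (∫ h, ∫ h', jloss ev (h, h') z ∂Q ∂Q) = ∫ p, jloss ev p z ∂(Q.prod Q) := fun z =>
      integral_integral (f := fun h h' => jloss ev (h, h') z) (hQjint z)
    have hLHSeq : (∫ z, ∫ h, ∫ h',
        (if ev h z.1 ≠ z.2 ∧ ev h' z.1 ≠ z.2 then (1 : ℝ) else 0) ∂Q ∂Q ∂PS)
        = ∫ p, Rj ev PS p ∂(Q.prod Q) := by
      have hswapint : Integrable (Function.uncurry fun (z : X × Bool) (p : Ω × Ω) =>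
          jloss ev p z) (PS.prod (Q.prod Q)) :=
        integrable_of_bounded _ ((measurable_jloss ev hev).comp
          (measurable_snd.prodMk measurable_fst)).aestronglyMeasurable 1 fun q =>
          abs_le.2 ⟨le_trans (by norm_num) (jloss_nonneg ev q.2 q.1), jloss_le_one ev q.2 q.1⟩
      have step1 : (∫ z, ∫ h, ∫ h',
          (if ev h z.1 ≠ z.2 ∧ ev h' z.1 ≠ z.2 then (1 : ℝ) else 0) ∂Q ∂Q ∂PS)
          = ∫ z, ∫ p, jloss ev p z ∂(Q.prod Q) ∂PS :=
        integral_congr_ae (ae_of_all _ fun z => hdouble z)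
      rw [step1]
      exact integral_integral_swap hswapint
    have hSUMeq : (1 / (ms : ℝ)) * ∑ i : Fin ms, ∫ h, ∫ h',
        (if ev h (S i).1 ≠ (S i).2 ∧ ev h' (S i).1 ≠ (S i).2 then (1 : ℝ) else 0) ∂Q ∂Q
        = (1 / (ms : ℝ)) * ∫ p, XS ev S p ∂(Q.prod Q) := by
      congr 1
      calc (∑ i : Fin ms, ∫ h, ∫ h',
            (if ev h (S i).1 ≠ (S i).2 ∧ ev h' (S i).1 ≠ (S i).2 then (1 : ℝ) else 0) ∂Q ∂Q)
          = ∑ i : Fin ms, ∫ p, jloss ev p (S i) ∂(Q.prod Q) :=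
            Finset.sum_congr rfl fun i _ => hdouble (S i)
        _ = ∫ p, ∑ i : Fin ms, jloss ev p (S i) ∂(Q.prod Q) :=
            (integral_finset_sum _ fun i _ => hQjint (S i)).symm
        _ = ∫ p, XS ev S p ∂(Q.prod Q) := rfl
    rw [hLHSeq, hSUMeq]
    by_cases hKL : Q ≪ pr ∧ Integrable (llr Q pr) Q
    · obtain ⟨hac, hllr⟩ := hKL
      rw [klDivergence, if_pos ⟨hac, hllr⟩]
      have hGSpos : 0 < ∫ p, Real.exp (Fn ev PS b ms S p) ∂(pr.prod pr) := by
        calc (0:ℝ) < Real.exp (-(b * ms)) := Real.exp_pos _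
          _ = ∫ _p, Real.exp (-(b * ms)) ∂(pr.prod pr) := by simp
          _ ≤ _ := integral_mono (integrable_const _) (hexpint S) fun p =>
              Real.exp_le_exp.2 (neg_le_of_abs_le (abs_Fn_le ev PS hev b hb S p))
      have hdv : ∫ p, Fn ev PS b ms S p ∂(Q.prod Q)
          ≤ 2 * (∫ h, llr Q pr h ∂Q)
            + Real.log (∫ p, Real.exp (Fn ev PS b ms S p) ∂(pr.prod pr)) :=
        dv_core Q pr hac hllr (fun p => Fn ev PS b ms S p) (hFSm S) (b * ms)
          (fun p => abs_Fn_le ev PS hev b hb S p)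
      have hlog : Real.log (∫ p, Real.exp (Fn ev PS b ms S p) ∂(pr.prod pr))
          ≤ Real.log (1 / δ) := Real.log_le_log hGSpos hS
      -- pointwise bound
      have hpt : ∀ p : Ω × Ω, ((ms : ℝ) * c) * Rj ev PS p
          ≤ b * XS ev S p + Fn ev PS b ms S p := by
        intro p
        have hy : 0 < 1 - c * Rj ev PS p := by
          have := one_sub_c_mul_Rj_pos ev PS hev b hb p
          rw [← hcdef] at this; exact this
        have hlogle := Real.log_le_sub_one_of_pos hy
        have h1 : c * Rj ev PS p ≤ - Real.log (1 - c * Rj ev PS p) := by linarith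
        have h2 : (ms : ℝ) * (c * Rj ev PS p)
            ≤ (ms : ℝ) * (- Real.log (1 - c * Rj ev PS p)) :=
          mul_le_mul_of_nonneg_left h1 (Nat.cast_nonneg ms)
        calc ((ms : ℝ) * c) * Rj ev PS p = (ms : ℝ) * (c * Rj ev PS p) := by ring
          _ ≤ (ms : ℝ) * (- Real.log (1 - c * Rj ev PS p)) := h2
          _ = b * XS ev S p + Fn ev PS b ms S p := by rw [Fn, ← hcdef]; ring
      -- integrabilities on Q.prod Q
      have hRint : Integrable (Rj ev PS) (Q.prod Q) :=
        integrable_of_bounded _ (measurable_Rj ev PS hev).aestronglyMeasurable 1 fun p =>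
          abs_le.2 ⟨by linarith [Rj_nonneg ev PS p], Rj_le_one ev PS hev p⟩
      have hXm : Measurable (XS ev S) :=
        (measurable_XS_pair ev hev).comp (measurable_const.prodMk measurable_id)
      have hXint : Integrable (XS ev S) (Q.prod Q) :=
        integrable_of_bounded _ hXm.aestronglyMeasurable ms fun p =>
          abs_le.2 ⟨by linarith [XS_nonneg ev S p], XS_le ev S p⟩
      have hFint : Integrable (fun p => Fn ev PS b ms S p) (Q.prod Q) :=
        integrable_of_bounded _ (hFSm S).aestronglyMeasurable (b * ms)
          (fun p => abs_Fn_le ev PS hev b hb S p)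
      have hmono : ∫ p, ((ms : ℝ) * c) * Rj ev PS p ∂(Q.prod Q)
          ≤ ∫ p, (b * XS ev S p + Fn ev PS b ms S p) ∂(Q.prod Q) :=
        integral_mono (hRint.const_mul _) ((hXint.const_mul b).add hFint) hpt
      have e1 := integral_smul (μ := Q.prod Q) ((ms : ℝ) * c) (Rj ev PS)
      simp only [smul_eq_mul] at e1
      have e2 := integral_smul (μ := Q.prod Q) b (XS ev S)
      simp only [smul_eq_mul] at e2
      rw [e1, integral_add (hXint.const_mul b) hFint, e2] at hmono
      have hcomb : ((ms : ℝ) * c) * (∫ p, Rj ev PS p ∂(Q.prod Q))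
          ≤ b * (∫ p, XS ev S p ∂(Q.prod Q))
            + (2 * (∫ h, llr Q pr h ∂Q) + Real.log (1 / δ)) :=
        le_trans hmono (add_le_add_right (hdv.trans (add_le_add_right hlog _)) _)
      have hmspos : (0:ℝ) < ms := Nat.cast_pos.2 hms
      have hmb : (0:ℝ) < (ms : ℝ) * b := mul_pos hmspos hb
      have hmc : (0:ℝ) < (ms : ℝ) * c := mul_pos hmspos hc
      have hrhs : (b / c) * ((1 / (ms : ℝ)) * (∫ p, XS ev S p ∂(Q.prod Q))
            + (2 * (∫ h, llr Q pr h ∂Q) + Real.log (1 / δ)) / ((ms : ℝ) * b))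
          = (b * (∫ p, XS ev S p ∂(Q.prod Q))
            + (2 * (∫ h, llr Q pr h ∂Q) + Real.log (1 / δ))) / ((ms : ℝ) * c) := by
        field_simp
      have hreal : (∫ p, Rj ev PS p ∂(Q.prod Q))
          ≤ (b / c) * ((1 / (ms : ℝ)) * (∫ p, XS ev S p ∂(Q.prod Q))
            + (2 * (∫ h, llr Q pr h ∂Q) + Real.log (1 / δ)) / ((ms : ℝ) * b)) := by
        rw [hrhs, le_div_iff₀ hmc]
        linarith
      calc ENNReal.ofReal (∫ p, Rj ev PS p ∂(Q.prod Q))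
          ≤ ENNReal.ofReal ((b / c) * ((1 / (ms : ℝ)) * (∫ p, XS ev S p ∂(Q.prod Q))
              + (2 * (∫ h, llr Q pr h ∂Q) + Real.log (1 / δ)) / ((ms : ℝ) * b))) :=
            ENNReal.ofReal_le_ofReal hreal
        _ = ENNReal.ofReal (b / c)
            * ENNReal.ofReal ((1 / (ms : ℝ)) * (∫ p, XS ev S p ∂(Q.prod Q))
              + (2 * (∫ h, llr Q pr h ∂Q) + Real.log (1 / δ)) / ((ms : ℝ) * b)) :=
            ENNReal.ofReal_mul (div_nonneg hb.le hc.le)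
        _ ≤ ENNReal.ofReal (b / c)
            * (ENNReal.ofReal ((1 / (ms : ℝ)) * (∫ p, XS ev S p ∂(Q.prod Q)))
              + ENNReal.ofReal ((2 * (∫ h, llr Q pr h ∂Q) + Real.log (1 / δ))
                / ((ms : ℝ) * b))) :=
            mul_le_mul_right ENNReal.ofReal_add_le _
        _ ≤ ENNReal.ofReal (b / c)
            * (ENNReal.ofReal ((1 / (ms : ℝ)) * (∫ p, XS ev S p ∂(Q.prod Q)))
              + (2 * ENNReal.ofReal (∫ h, llr Q pr h ∂Q)
                  + ENNReal.ofReal (Real.log (1 / δ))) / ENNReal.ofReal ((ms : ℝ) * b)) := by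
            refine mul_le_mul_right (add_le_add_right ?_ _) _
            rw [ENNReal.ofReal_div_of_pos hmb]
            refine ENNReal.div_le_div_right ?_ _
            calc ENNReal.ofReal (2 * (∫ h, llr Q pr h ∂Q) + Real.log (1 / δ))
                ≤ ENNReal.ofReal (2 * (∫ h, llr Q pr h ∂Q))
                  + ENNReal.ofReal (Real.log (1 / δ)) := ENNReal.ofReal_add_le
              _ = 2 * ENNReal.ofReal (∫ h, llr Q pr h ∂Q)
                  + ENNReal.ofReal (Real.log (1 / δ)) := by
                  rw [ENNReal.ofReal_mul (by norm_num : (0:ℝ) ≤ 2)]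
                  norm_num
    · rw [klDivergence, if_neg hKL]
      have htop : (2 * (⊤ : ℝ≥0∞) + ENNReal.ofReal (Real.log (1 / δ)))
          / ENNReal.ofReal ((ms : ℝ) * b) = ⊤ := by
        rw [ENNReal.mul_top (by norm_num : (2 : ℝ≥0∞) ≠ 0), top_add,
          ENNReal.top_div_of_ne_top ENNReal.ofReal_ne_top]
      rw [htop, add_top, ENNReal.mul_top hcoeffne]
      exact le_top
end
end
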